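/- arXiv:1405.3427 — 3 statements merged into one kernel-verified Lean document; each statement's English description precedes it below -/
import Mathlib

section
/- Let R be an SMLL net and M_R its SIAM machine. There is no infinite sequence of transitions of M_R starting from the initial state I_R. -/
/-! # SMLL: multiplicative linear logic with synchronization

Formalization of the proof-structures, correctness criterion, reduction and
multi-token machine (SIAM) of Dal Lago, Faggian, Hasuo, Yoshimizu,
"The Geometry of Synchronization". -/

/-- SMLL formulas (in negation normal form):
`A ::= 1 | ⊥ | X | X⊥ | A ⊗ A | A ⅋ A`. -/
inductive Formula : Type
  | one : Formula
  | bot : Formula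
  | var : ℕ → Formula
  | covar : ℕ → Formula
  | tens : Formula → Formula → Formula
  | parr : Formula → Formula → Formula
  deriving DecidableEq

namespace Formula

/-- Linear negation. -/
def dual : Formula → Formula
  | one => bot
  | bot => one
  | var n => covar n
  | covar n => var n
  | tens A B => parr A.dual B.dual
  | parr A B => tens A.dual B.dual

/-- Positive formulas: `P ::= 1 | P ⊗ P`. -/
inductive Positive : Formula → Prop
  | one : Positive one
  | tens {A B : Formula} : Positive A → Positive B → Positive (tens A B)

/-- Negative formulas: `N ::= ⊥ | N ⅋ N`. -/
inductive Negative : Formula → Prop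
  | bot : Negative bot
  | parr {A B : Formula} : Negative A → Negative B → Negative (parr A B)

/-- A formula is polarized when it is positive or negative. -/
def Polarized (A : Formula) : Prop := Positive A ∨ Negative A

/-- Whether `⊥` occurs in a formula. -/
def hasBotB : Formula → Bool
  | one => false
  | bot => true
  | var _ => false
  | covar _ => false
  | tens A B => hasBotB A || hasBotB B
  | parr A B => hasBotB A || hasBotB B

/-- Addresses of occurrences inside a formula: `false` = left, `true` = right. -/
abbrev Addr := List Bool

/-- Subformula at a given address (if the address is meaningful). -/
def sub : Formula → Addr → Option Formula
  | A, [] => some A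
  | tens A _, false :: m => sub A m
  | tens _ B, true :: m => sub B m
  | parr A _, false :: m => sub A m
  | parr _ B, true :: m => sub B m
  | _, _ :: _ => none

def IsAtom : Formula → Prop
  | one => True
  | bot => True
  | var _ => True
  | covar _ => True
  | tens _ _ => False
  | parr _ _ => False

/-- `m` is the address of an occurrence of an atom in `A`. -/
def AtomOcc (A : Formula) (m : Addr) : Prop := ∃ a, sub A m = some a ∧ IsAtom a

/-- The atom occurrence at `m` in `A` is positive (it is `1` or `X`). -/
def PosOcc (A : Formula) (m : Addr) : Prop :=
  ∃ a, sub A m = some a ∧ (a = one ∨ ∃ n, a = var n)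

/-- The atom occurrence at `m` in `A` is negative (it is `⊥` or `X⊥`). -/
def NegOcc (A : Formula) (m : Addr) : Prop :=
  ∃ a, sub A m = some a ∧ (a = bot ∨ ∃ n, a = covar n)

theorem NegOcc.atomOcc {A : Formula} {m : Addr} (h : NegOcc A m) : AtomOcc A m := by
  obtain ⟨a, ha, h⟩ := h
  refine ⟨a, ha, ?_⟩
  rcases h with rfl | ⟨n, rfl⟩ <;> trivial

theorem PosOcc.atomOcc {A : Formula} {m : Addr} (h : PosOcc A m) : AtomOcc A m := by
  obtain ⟨a, ha, h⟩ := h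
  refine ⟨a, ha, ?_⟩
  rcases h with rfl | ⟨n, rfl⟩ <;> trivial

end Formula

/-- The sorts of links of an SMLL structure. -/
inductive LinkSort : Type
  | ax | cut | tens | parr | one | bot | sync
  deriving DecidableEq

/-- An SMLL proof-structure (with boxes): a finite directed multigraph whose
edges are typed by formulas and whose nodes are links.  Every edge is the
conclusion of exactly one link (its `src`); it is the premiss of the link
`tgt`, if any (edges with no target are the conclusions of the structure).
`pIdx` indexes an edge among the premisses of its target (for `⊗`/`⅋`-links:
`0` = left, `1` = right; for sync links it pairs premisses with conclusions);
`cIdx` indexes an edge among the conclusions of its source (for sync links,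
the `i`-th conclusion corresponds to the `i`-th premiss).  Each `bot`-link is
the lock of a box; `box n` is the innermost box containing the node `n` and
`boxes n` is the set of all boxes containing `n`. -/
structure Struct : Type 1 where
  Edge : Type
  Node : Type
  edgeFintype : Fintype Edge
  nodeFintype : Fintype Node
  edgeDecEq : DecidableEq Edge
  nodeDecEq : DecidableEq Node
  typ : Edge → Formula
  sort : Node → LinkSort
  src : Edge → Node
  tgt : Edge → Option Node
  pIdx : Edge → ℕ
  cIdx : Edge → ℕ
  box : Node → Option Node
  boxes : Node → Finset Node

attribute [instance] Struct.edgeFintype Struct.nodeFintype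
attribute [instance] Struct.edgeDecEq Struct.nodeDecEq

namespace Struct

variable (S : Struct)

/-- The conclusions of a link. -/
def concls (n : S.Node) : Finset S.Edge := Finset.univ.filter fun e => S.src e = n

/-- The premisses of a link. -/
def prems (n : S.Node) : Finset S.Edge := Finset.univ.filter fun e => S.tgt e = some n

/-- The conclusions of the structure. -/
def IsConcl (e : S.Edge) : Prop := S.tgt e = none

/-- Well-formedness of an SMLL structure: the constraints that the sort of a
link induces on the number and the types of its premisses and conclusions,
together with the coherence of the nesting of boxes. -/
def WF : Prop :=
  (∀ n, S.sort n = .ax → S.prems n = ∅ ∧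
    ∃ e f, e ≠ f ∧ S.concls n = {e, f} ∧ S.typ f = (S.typ e).dual) ∧
  (∀ n, S.sort n = .cut → S.concls n = ∅ ∧
    ∃ e f, e ≠ f ∧ S.prems n = {e, f} ∧ S.typ f = (S.typ e).dual) ∧
  (∀ n, S.sort n = .tens → ∃ e f g, e ≠ f ∧ S.prems n = {e, f} ∧
    S.pIdx e = 0 ∧ S.pIdx f = 1 ∧ S.concls n = {g} ∧
    S.typ g = .tens (S.typ e) (S.typ f)) ∧
  (∀ n, S.sort n = .parr → ∃ e f g, e ≠ f ∧ S.prems n = {e, f} ∧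
    S.pIdx e = 0 ∧ S.pIdx f = 1 ∧ S.concls n = {g} ∧
    S.typ g = .parr (S.typ e) (S.typ f)) ∧
  (∀ n, S.sort n = .one → S.prems n = ∅ ∧ ∃ e, S.concls n = {e} ∧ S.typ e = .one) ∧
  (∀ n, S.sort n = .bot → S.prems n = ∅ ∧ ∃ e, S.concls n = {e} ∧ S.typ e = .bot) ∧
  (∀ n, S.sort n = .sync →
    (∀ e ∈ S.prems n, (S.typ e).Polarized) ∧
    (∀ e ∈ S.prems n, ∃! f, f ∈ S.concls n ∧ S.cIdx f = S.pIdx e) ∧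
    (∀ f ∈ S.concls n, ∃! e, e ∈ S.prems n ∧ S.pIdx e = S.cIdx f) ∧
    (∀ e ∈ S.prems n, ∀ f ∈ S.concls n, S.cIdx f = S.pIdx e → S.typ f = S.typ e)) ∧
  (∀ n b, b ∈ S.boxes n → S.sort b = .bot) ∧
  (∀ n, S.box n = none → S.boxes n = ∅) ∧
  (∀ n b, S.box n = some b → b ∉ S.boxes b ∧ S.boxes n = insert b (S.boxes b)) ∧
  (∀ e n, S.tgt e = some n → S.boxes n ⊆ S.boxes (S.src e))

/-- `b` is the representative of the node `m` in the level-`ℓ` graph (the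
graph in which each box strictly below level `ℓ` is collapsed to a single
box-node, identified with its `bot`-link).  For `ℓ = none` this is the
`0`-graph. -/
def RepAt (ℓ : Option S.Node) (m b : S.Node) : Prop :=
  (S.box m = ℓ ∧ b = m) ∨ (b ∈ S.boxes m ∧ S.box b = ℓ)

/-- Edge `e` joins the nodes `u` and `v` (undirectedly) in the level-`ℓ` graph. -/
def ConnectsAt (ℓ : Option S.Node) (e : S.Edge) (u v : S.Node) : Prop :=
  ∃ t, S.tgt e = some t ∧ (S.box t = ℓ ∨ S.box (S.src e) = ℓ) ∧
    ((S.RepAt ℓ (S.src e) u ∧ S.RepAt ℓ t v) ∨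
     (S.RepAt ℓ (S.src e) v ∧ S.RepAt ℓ t u))

/-- The out-edges of a sync link are its positive conclusions and its negative
premisses. -/
def OutEdgeOf (l : S.Node) (e : S.Edge) : Prop :=
  S.sort l = .sync ∧
  ((S.src e = l ∧ (S.typ e).Positive) ∨ (S.tgt e = some l ∧ (S.typ e).Negative))

/-- There is a switching cycle in the level-`ℓ` graph: a cyclic undirected
simple path which uses at most one of the two premisses of each `⅋`-link and
at most one out-edge of each sync link. -/
def SwitchingCycleAt (ℓ : Option S.Node) : Prop :=
  ∃ (k : ℕ) (v : Fin (k + 1) → S.Node) (e : Fin (k + 1) → S.Edge),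
    Function.Injective v ∧ Function.Injective e ∧
    (∀ i, S.ConnectsAt ℓ (e i) (v i) (v (i + 1))) ∧
    (∀ p, S.sort p = .parr → Set.Subsingleton {i | S.tgt (e i) = some p}) ∧
    (∀ l, S.sort l = .sync → Set.Subsingleton {i | S.OutEdgeOf l (e i)})

/-- Correctness criterion: no switching cycle in the `0`-graph, and,
recursively, no switching cycle in the graph of the content of any box. -/
def Correct : Prop := ∀ ℓ : Option S.Node, ¬ S.SwitchingCycleAt ℓ

/-- A net is a well-formed correct structure. -/
def IsNet : Prop := S.WF ∧ S.Correct

/-! ## Sync paths and hereditary conclusions -/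

/-- One step of a sync path: entering a sync link on a premiss and coming out
on the corresponding conclusion. -/
def SyncStepE (e f : S.Edge) : Prop :=
  ∃ l, S.sort l = .sync ∧ S.tgt e = some l ∧ S.src f = l ∧ S.cIdx f = S.pIdx e

/-- `e` is a hereditary conclusion of the link `l`: there is a sync path from
a conclusion of `l` to `e`. -/
def HereditaryConcl (l : S.Node) (e : S.Edge) : Prop :=
  ∃ f, S.src f = l ∧ Relation.ReflTransGen S.SyncStepE f e

/-- The edge emerges from a box: its source is a `bot`-link (the edge is the
lock of a box) or lies inside some box. -/
def FromBox (e : S.Edge) : Prop := S.sort (S.src e) = .bot ∨ S.box (S.src e) ≠ none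

/-- `e` is a hereditary conclusion of a box. -/
def HereditaryBoxConcl (e : S.Edge) : Prop :=
  ∃ f, S.FromBox f ∧ Relation.ReflTransGen S.SyncStepE f e

/-- A ready cut: a cut at depth 0 neither of whose premisses is a hereditary
conclusion of a box. -/
def ReadyCut (c : S.Node) : Prop :=
  S.sort c = .cut ∧ S.box c = none ∧ ∀ e ∈ S.prems c, ¬ S.HereditaryBoxConcl e

/-! ## Polarized paths and the order on links -/

/-- A node is polarized when all of its conclusions are polarized. -/
def PolarizedNode (n : S.Node) : Prop := ∀ e ∈ S.concls n, (S.typ e).Polarized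

/-- A single step of a polarized path from link `a` to link `b` along the
polarized edge `e`: downwards on positive edges, upwards on negative edges,
connecting polarized nodes and never entering boxes. -/
def PolStep (e : S.Edge) (a b : S.Node) : Prop :=
  S.box a = none ∧ S.box b = none ∧ S.PolarizedNode a ∧ S.PolarizedNode b ∧
  (((S.typ e).Positive ∧ S.src e = a ∧ S.tgt e = some b) ∨
   ((S.typ e).Negative ∧ S.tgt e = some a ∧ S.src e = b))

/-- `a ≺ b` : there is a (simple) polarized path from `a` to `b`. -/
def prec (a b : S.Node) : Prop :=
  ∃ (k : ℕ) (v : Fin (k + 2) → S.Node) (e : Fin (k + 1) → S.Edge),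
    v 0 = a ∧ v (Fin.last _) = b ∧
    Function.Injective v ∧ Function.Injective e ∧
    ∀ i : Fin (k + 1), S.PolStep (e i) (v i.castSucc) (v i.succ)

/-- SMLL⁰ structures: no unit links (hence no boxes). -/
def UnitFree : Prop := ∀ n : S.Node, S.sort n ≠ .one ∧ S.sort n ≠ .bot

/-- Closed structures: no `⊥` occurs in the conclusions. -/
def Closed : Prop := ∀ e : S.Edge, S.tgt e = none → (S.typ e).hasBotB = false

end Struct

/-! ## Reduction -/

/-- A partial injection `j` whose (some-)range is exactly `X`. -/
def PInjOnto {α β : Type*} (j : α → Option β) (X : Set β) : Prop :=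
  (∀ a a' b, j a = some b → j a' = some b → a = a') ∧
  (∀ a b, j a = some b → b ∈ X) ∧
  (∀ b ∈ X, ∃ a, j a = some b)

/-- `j` is total. -/
def JTotal {α β : Type*} (j : α → Option β) : Prop := ∀ a, j a ≠ none

/-- The structures `Q` and `R` agree, along the correspondences `jN`, `jE`,
on all edges outside `XE` and all nodes outside `XN`. -/
def AgreesOn (Q R : Struct) (jN : Q.Node → Option R.Node)
    (jE : Q.Edge → Option R.Edge) (XE : Set R.Edge) (XN : Set R.Node) : Prop :=
  (∀ x y, jE x = some y → y ∉ XE →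
    Q.typ x = R.typ y ∧ jN (Q.src x) = some (R.src y) ∧
    (Q.tgt x).bind jN = R.tgt y ∧ Q.pIdx x = R.pIdx y ∧ Q.cIdx x = R.cIdx y) ∧
  (∀ n m, jN n = some m → m ∉ XN →
    Q.sort n = R.sort m ∧ (Q.box n).bind jN = R.box m ∧
    (∀ b b', jN b = some b' → (b ∈ Q.boxes n ↔ b' ∈ R.boxes m)))

/-- The `ax/cut` step: a cut between a conclusion `v` of an axiom `a` and the
dual premiss is removed together with the axiom; the remaining conclusion `u`
of the axiom and the remaining premiss `q` of the cut are merged. -/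
def AxCutStep (R Q : Struct) : Prop :=
  ∃ (a c : R.Node) (v u q : R.Edge),
    R.sort a = .ax ∧ R.sort c = .cut ∧ R.box a = none ∧ R.box c = none ∧
    v ≠ u ∧ v ≠ q ∧ u ≠ q ∧
    R.concls a = {v, u} ∧ R.prems c = {v, q} ∧
    ∃ (jN : Q.Node → Option R.Node) (jE : Q.Edge → Option R.Edge),
      JTotal jN ∧ JTotal jE ∧
      PInjOnto jN {n | n ≠ a ∧ n ≠ c} ∧
      PInjOnto jE {x | x ≠ v ∧ x ≠ u} ∧
      AgreesOn Q R jN jE {q} ∅ ∧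
      (∀ x, jE x = some q →
        Q.typ x = R.typ q ∧ jN (Q.src x) = some (R.src q) ∧
        (Q.tgt x).bind jN = R.tgt u ∧ Q.pIdx x = R.pIdx u ∧ Q.cIdx x = R.cIdx q)

/-- The `⊗/⅋` step: a cut between `A ⊗ B` and `A⊥ ⅋ B⊥` is replaced by two
cuts between the respective premisses. -/
def TensParrStep (R Q : Struct) : Prop :=
  ∃ (c t p : R.Node) (s s' a1 a2 b1 b2 : R.Edge),
    R.sort c = .cut ∧ R.sort t = .tens ∧ R.sort p = .parr ∧
    R.box c = none ∧ R.box t = none ∧ R.box p = none ∧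
    s ≠ s' ∧ R.prems c = {s, s'} ∧ R.concls t = {s} ∧ R.concls p = {s'} ∧
    a1 ≠ a2 ∧ R.prems t = {a1, a2} ∧ R.pIdx a1 = 0 ∧ R.pIdx a2 = 1 ∧
    b1 ≠ b2 ∧ R.prems p = {b1, b2} ∧ R.pIdx b1 = 0 ∧ R.pIdx b2 = 1 ∧
    ∃ (jN : Q.Node → Option R.Node) (jE : Q.Edge → Option R.Edge) (c' : Q.Node),
      JTotal jE ∧
      PInjOnto jN {n | n ≠ t ∧ n ≠ p} ∧
      PInjOnto jE {x | x ≠ s ∧ x ≠ s'} ∧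
      jN c' = none ∧ (∀ n, jN n = none → n = c') ∧
      Q.sort c' = .cut ∧ Q.box c' = none ∧ Q.boxes c' = ∅ ∧
      AgreesOn Q R jN jE {a1, a2, b1, b2} ∅ ∧
      (∀ x y, jE x = some y → y = a1 ∨ y = b1 →
        Q.typ x = R.typ y ∧ jN (Q.src x) = some (R.src y) ∧
        (Q.tgt x).bind jN = some c ∧ Q.cIdx x = R.cIdx y) ∧
      (∀ x y, jE x = some y → y = a2 ∨ y = b2 →
        Q.typ x = R.typ y ∧ jN (Q.src x) = some (R.src y) ∧
        Q.tgt x = some c' ∧ Q.cIdx x = R.cIdx y)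

/-- Commutation of a sync link with a `⊗` or `⅋` link: the sync link acting
on the conclusion `z` of the multiplicative link `m` (with corresponding sync
conclusion `w`) is pushed above `m`, now acting on the two premisses `x`, `y`
of `m` via two fresh sync positions (indices `i₁`, `i₂`) with fresh edges
`x'`, `y'`. -/
def SyncMultStep (R Q : Struct) : Prop :=
  ∃ (l m : R.Node) (z w x y : R.Edge) (i₁ i₂ : ℕ),
    R.sort l = .sync ∧ (R.sort m = .tens ∨ R.sort m = .parr) ∧
    R.box l = none ∧ R.box m = none ∧
    R.src z = m ∧ R.tgt z = some l ∧ R.src w = l ∧ R.cIdx w = R.pIdx z ∧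
    x ≠ y ∧ R.prems m = {x, y} ∧ R.pIdx x = 0 ∧ R.pIdx y = 1 ∧
    i₁ ≠ i₂ ∧
    (∀ e, R.tgt e = some l → R.pIdx e ≠ i₁ ∧ R.pIdx e ≠ i₂) ∧
    (∀ e, R.src e = l → R.cIdx e ≠ i₁ ∧ R.cIdx e ≠ i₂) ∧
    ∃ (jN : Q.Node → Option R.Node) (jE : Q.Edge → Option R.Edge)
      (l' m' : Q.Node) (x' y' : Q.Edge),
      JTotal jN ∧ PInjOnto jN Set.univ ∧
      PInjOnto jE {e | e ≠ z} ∧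
      jN l' = some l ∧ jN m' = some m ∧
      x' ≠ y' ∧ jE x' = none ∧ jE y' = none ∧ (∀ e, jE e = none → e = x' ∨ e = y') ∧
      AgreesOn Q R jN jE {x, y, w} ∅ ∧
      (∀ e, jE e = some x →
        Q.typ e = R.typ x ∧ jN (Q.src e) = some (R.src x) ∧
        Q.tgt e = some l' ∧ Q.pIdx e = i₁ ∧ Q.cIdx e = R.cIdx x) ∧
      (∀ e, jE e = some y →
        Q.typ e = R.typ y ∧ jN (Q.src e) = some (R.src y) ∧
        Q.tgt e = some l' ∧ Q.pIdx e = i₂ ∧ Q.cIdx e = R.cIdx y) ∧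
      (∀ e, jE e = some w →
        Q.typ e = R.typ w ∧ Q.src e = m' ∧
        (Q.tgt e).bind jN = R.tgt w ∧ Q.pIdx e = R.pIdx w ∧ Q.cIdx e = R.cIdx w) ∧
      (Q.typ x' = R.typ x ∧ Q.src x' = l' ∧ Q.tgt x' = some m' ∧
        Q.pIdx x' = 0 ∧ Q.cIdx x' = i₁) ∧
      (Q.typ y' = R.typ y ∧ Q.src y' = l' ∧ Q.tgt y' = some m' ∧
        Q.pIdx y' = 1 ∧ Q.cIdx y' = i₂)

/-- Commutation of a sync link with an axiom: a sync link acting on a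
positive conclusion `u` of an axiom (with corresponding conclusion `u'`) is
moved to the axiom's other conclusion `v` (of type `P⊥`), with a fresh sync
position of index `j` and fresh edge `v'`. -/
def SyncAxStep (R Q : Struct) : Prop :=
  ∃ (l a : R.Node) (u u' v : R.Edge) (j : ℕ),
    R.sort l = .sync ∧ R.sort a = .ax ∧ R.box l = none ∧ R.box a = none ∧
    (R.typ u).Positive ∧ u ≠ v ∧ R.concls a = {u, v} ∧
    R.tgt u = some l ∧ R.src u' = l ∧ R.cIdx u' = R.pIdx u ∧ u' ≠ u ∧ u' ≠ v ∧
    (∀ e, R.tgt e = some l → R.pIdx e ≠ j) ∧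
    (∀ e, R.src e = l → R.cIdx e ≠ j) ∧
    ∃ (jN : Q.Node → Option R.Node) (jE : Q.Edge → Option R.Edge)
      (l' a' : Q.Node) (v' : Q.Edge),
      JTotal jN ∧ PInjOnto jN Set.univ ∧ PInjOnto jE {e | e ≠ u} ∧
      jN l' = some l ∧ jN a' = some a ∧
      jE v' = none ∧ (∀ e, jE e = none → e = v') ∧
      AgreesOn Q R jN jE {u', v} ∅ ∧
      (∀ e, jE e = some u' →
        Q.typ e = R.typ u' ∧ Q.src e = a' ∧ Q.cIdx e = R.cIdx u ∧
        (Q.tgt e).bind jN = R.tgt u' ∧ Q.pIdx e = R.pIdx u') ∧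
      (∀ e, jE e = some v →
        Q.typ e = R.typ v ∧ Q.src e = a' ∧ Q.cIdx e = R.cIdx v ∧
        Q.tgt e = some l' ∧ Q.pIdx e = j) ∧
      (Q.typ v' = R.typ v ∧ Q.src v' = l' ∧ Q.cIdx v' = j ∧
        (Q.tgt v').bind jN = R.tgt v ∧ Q.pIdx v' = R.pIdx v)

/-- Commutation of a sync link with a cut: a sync link acting on the premiss
`d'` (of negative type `P⊥`) of a cut is moved to the other premiss `q`. -/
def SyncCutStep (R Q : Struct) : Prop :=
  ∃ (l c : R.Node) (d d' q : R.Edge) (j : ℕ),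
    R.sort l = .sync ∧ R.sort c = .cut ∧ R.box l = none ∧ R.box c = none ∧
    (R.typ d').Negative ∧
    R.src d' = l ∧ R.tgt d' = some c ∧ R.tgt d = some l ∧ R.pIdx d = R.cIdx d' ∧
    d' ≠ q ∧ d ≠ q ∧ d ≠ d' ∧ R.prems c = {d', q} ∧
    (∀ e, R.tgt e = some l → R.pIdx e ≠ j) ∧
    (∀ e, R.src e = l → R.cIdx e ≠ j) ∧
    ∃ (jN : Q.Node → Option R.Node) (jE : Q.Edge → Option R.Edge)
      (l' c' : Q.Node) (q' : Q.Edge),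
      JTotal jN ∧ PInjOnto jN Set.univ ∧ PInjOnto jE {e | e ≠ d'} ∧
      jN l' = some l ∧ jN c' = some c ∧
      jE q' = none ∧ (∀ e, jE e = none → e = q') ∧
      AgreesOn Q R jN jE {d, q} ∅ ∧
      (∀ e, jE e = some d →
        Q.typ e = R.typ d ∧ jN (Q.src e) = some (R.src d) ∧ Q.cIdx e = R.cIdx d ∧
        Q.tgt e = some c' ∧ Q.pIdx e = R.pIdx d') ∧
      (∀ e, jE e = some q →
        Q.typ e = R.typ q ∧ jN (Q.src e) = some (R.src q) ∧ Q.cIdx e = R.cIdx q ∧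
        Q.tgt e = some l' ∧ Q.pIdx e = j) ∧
      (Q.typ q' = R.typ q ∧ Q.src q' = l' ∧ Q.cIdx q' = j ∧
        Q.tgt q' = some c' ∧ Q.pIdx q' = R.pIdx q)

/-- Sync elimination: a sync link all of whose premisses are conclusions of
`one`-links is erased, merging each premiss with its corresponding
conclusion. -/
def SyncElimStep (R Q : Struct) : Prop :=
  ∃ l : R.Node, R.sort l = .sync ∧ R.box l = none ∧
    (∀ e ∈ R.prems l, R.sort (R.src e) = .one) ∧
    ∃ (jN : Q.Node → Option R.Node) (jE : Q.Edge → Option R.Edge),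
      JTotal jN ∧ JTotal jE ∧
      PInjOnto jN {n | n ≠ l} ∧
      PInjOnto jE {e | R.src e ≠ l} ∧
      AgreesOn Q R jN jE {e | R.tgt e = some l} ∅ ∧
      (∀ x e f, jE x = some e → R.tgt e = some l → R.src f = l →
        R.cIdx f = R.pIdx e →
        Q.typ x = R.typ e ∧ jN (Q.src x) = some (R.src e) ∧
        (Q.tgt x).bind jN = R.tgt f ∧ Q.pIdx x = R.pIdx f ∧ Q.cIdx x = R.cIdx e)

/-- The `one/⊥` step (box opening): a cut between the conclusion `o` of a
`one`-link `n₁` and the lock `k` of a box `b` removes the cut, the `one`-link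
and the `bot`-link, and opens the box. -/
def OneBotStep (R Q : Struct) : Prop :=
  ∃ (c n₁ b : R.Node) (o k : R.Edge),
    R.sort c = .cut ∧ R.sort n₁ = .one ∧ R.sort b = .bot ∧
    R.box c = none ∧ R.box n₁ = none ∧ R.box b = none ∧
    o ≠ k ∧ R.prems c = {o, k} ∧ R.src o = n₁ ∧ R.src k = b ∧
    ∃ (jN : Q.Node → Option R.Node) (jE : Q.Edge → Option R.Edge),
      JTotal jN ∧ JTotal jE ∧
      PInjOnto jN {n | n ≠ c ∧ n ≠ n₁ ∧ n ≠ b} ∧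
      PInjOnto jE {e | e ≠ o ∧ e ≠ k} ∧
      (∀ x e, jE x = some e →
        Q.typ x = R.typ e ∧ jN (Q.src x) = some (R.src e) ∧
        (Q.tgt x).bind jN = R.tgt e ∧ Q.pIdx x = R.pIdx e ∧ Q.cIdx x = R.cIdx e) ∧
      (∀ n m, jN n = some m →
        Q.sort n = R.sort m ∧
        (∀ b₀ b₀', jN b₀ = some b₀' → (b₀ ∈ Q.boxes n ↔ b₀' ∈ R.boxes m ∧ b₀' ≠ b)) ∧
        (R.box m = some b → Q.box n = none) ∧
        (R.box m ≠ some b → (Q.box n).bind jN = R.box m))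

/-- The sync-commutation and sync-elimination steps. -/
def SyncRed (R Q : Struct) : Prop :=
  SyncMultStep R Q ∨ SyncAxStep R Q ∨ SyncCutStep R Q ∨ SyncElimStep R Q

/-- The reduction relation `→` on SMLL structures (applied at depth 0 only). -/
def Step (R Q : Struct) : Prop :=
  AxCutStep R Q ∨ TensParrStep R Q ∨ SyncRed R Q ∨ OneBotStep R Q

/-- Isomorphism of structures. -/
def Isom (R Q : Struct) : Prop :=
  ∃ (en : R.Node ≃ Q.Node) (ee : R.Edge ≃ Q.Edge),
    (∀ e, Q.typ (ee e) = R.typ e) ∧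
    (∀ e, Q.src (ee e) = en (R.src e)) ∧
    (∀ e, Q.tgt (ee e) = (R.tgt e).map en) ∧
    (∀ e, Q.pIdx (ee e) = R.pIdx e) ∧
    (∀ e, Q.cIdx (ee e) = R.cIdx e) ∧
    (∀ n, Q.sort (en n) = R.sort n) ∧
    (∀ n, Q.box (en n) = (R.box n).map en) ∧
    (∀ n, Q.boxes (en n) = (R.boxes n).image en)

/-! ## The SIAM: a synchronous interaction abstract machine -/

namespace Struct

variable (S : Struct)

/-- The value of a token: either an occurrence of an atom on an edge, or a
position `(e, i)` on the lock `e` of a box (`BOTBOX`). -/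
inductive PosVal (S : Struct) : Type
  | atom : S.Edge → Formula.Addr → PosVal S
  | lock : S.Edge → ℕ → PosVal S

/-- Initial positions: negative atom occurrences in the conclusions. -/
def InitPos (p : S.Edge × Formula.Addr) : Prop :=
  S.tgt p.1 = none ∧ Formula.NegOcc (S.typ p.1) p.2

/-- Final positions: positive atom occurrences in the conclusions. -/
def FinPos (p : S.Edge × Formula.Addr) : Prop :=
  S.tgt p.1 = none ∧ Formula.PosOcc (S.typ p.1) p.2

/-- One positions: conclusions of `one`-links. -/
def OnePos (p : S.Edge × Formula.Addr) : Prop :=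
  S.sort (S.src p.1) = .one ∧ p.2 = []

/-- Valid token values: genuine atom occurrences, or positions on the lock of
a box. -/
def ValidVal : PosVal S → Prop
  | .atom e m => Formula.AtomOcc (S.typ e) m
  | .lock e _ => S.sort (S.src e) = .bot

end Struct

/-- A state of the SIAM machine `M_S`: a (partial) function from
`INIT(S) ∪ L` (with `L ⊆ ONES(S)`) to the positions of `S`; it records, for
each token, its origin and its current position. -/
structure SState (S : Struct) where
  f : S.Edge × Formula.Addr → Option (Struct.PosVal S)
  dom_subset : ∀ p, f p ≠ none → S.InitPos p ∨ S.OnePos p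
  init_total : ∀ p, S.InitPos p → f p ≠ none
  val_valid : ∀ p v, f p = some v → S.ValidVal v

namespace Struct

variable (S : Struct)

/-- The box `b` is unlocked in state `T`: some token sits on its lock. -/
def Unlocked (T : SState S) (b : S.Node) : Prop :=
  ∃ p e i, T.f p = some (.lock e i) ∧ S.src e = b

/-- A link is active: all the boxes containing it are unlocked. -/
def Active (T : SState S) (n : S.Node) : Prop :=
  ∀ b ∈ S.boxes n, S.Unlocked T b

end Struct

open Classical in
/-- The initial state `I_S`: the identity on the initial positions. -/
noncomputable def initState (S : Struct) : SState S where
  f := fun p => if S.InitPos p then some (.atom p.1 p.2) else none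
  dom_subset := by
    intro p hp
    by_cases h : S.InitPos p
    · exact Or.inl h
    · simp [h] at hp
  init_total := by intro p hp; simp [hp]
  val_valid := by
    intro p v hv
    by_cases h : S.InitPos p
    · simp only [if_pos h, Option.some.injEq] at hv
      subst hv
      exact h.2.atomOcc
    · simp [h] at hv

/-- The transition relation of the SIAM.  Tokens on negative atom occurrences
move upwards, tokens on positive atom occurrences move downwards; all tokens
cross a sync link simultaneously, when each of its in-edges is saturated;
active `one`-links may spawn a token; a token reaching the lock of a box
unlocks it.  Tokens may only cross active links (so they can enter a box only
when it is unlocked). -/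
inductive STrans (S : Struct) : SState S → SState S → Prop
  | axUp {T T' : SState S} {p : S.Edge × Formula.Addr} {e e' : S.Edge}
      {m : Formula.Addr} {a : S.Node} :
      T.f p = some (.atom e m) →
      Formula.NegOcc (S.typ e) m →
      S.src e = a → S.sort a = .ax → S.Active T a →
      S.src e' = a → e' ≠ e →
      (∀ q, q ≠ p → T'.f q = T.f q) →
      T'.f p = some (.atom e' m) →
      STrans S T T'
  | cutDown {T T' : SState S} {p : S.Edge × Formula.Addr} {e e' : S.Edge}
      {m : Formula.Addr} {c : S.Node} :
      T.f p = some (.atom e m) →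
      Formula.PosOcc (S.typ e) m →
      S.tgt e = some c → S.sort c = .cut → S.Active T c →
      S.tgt e' = some c → e' ≠ e →
      (∀ q, q ≠ p → T'.f q = T.f q) →
      T'.f p = some (.atom e' m) →
      STrans S T T'
  | multDown {T T' : SState S} {p : S.Edge × Formula.Addr} {e g : S.Edge}
      {m : Formula.Addr} {n : S.Node} {b : Bool} :
      T.f p = some (.atom e m) →
      Formula.PosOcc (S.typ e) m →
      S.tgt e = some n → (S.sort n = .tens ∨ S.sort n = .parr) → S.Active T n →
      S.src g = n →
      S.pIdx e = (if b then 1 else 0) →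
      (∀ q, q ≠ p → T'.f q = T.f q) →
      T'.f p = some (.atom g (b :: m)) →
      STrans S T T'
  | multUp {T T' : SState S} {p : S.Edge × Formula.Addr} {e g : S.Edge}
      {m : Formula.Addr} {n : S.Node} {b : Bool} :
      T.f p = some (.atom g (b :: m)) →
      Formula.NegOcc (S.typ g) (b :: m) →
      S.src g = n → (S.sort n = .tens ∨ S.sort n = .parr) → S.Active T n →
      S.tgt e = some n →
      S.pIdx e = (if b then 1 else 0) →
      (∀ q, q ≠ p → T'.f q = T.f q) →
      T'.f p = some (.atom e m) →
      STrans S T T'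
  | lockTok {T T' : SState S} {p : S.Edge × Formula.Addr} {e : S.Edge}
      {b' : S.Node} :
      T.f p = some (.atom e []) →
      S.typ e = .bot →
      S.src e = b' → S.sort b' = .bot → S.Active T b' →
      (∀ q, q ≠ p → T'.f q = T.f q) →
      T'.f p = some (.lock e 0) →
      STrans S T T'
  | oneSpawn {T T' : SState S} {n : S.Node} {e : S.Edge} :
      S.sort n = .one → S.Active T n → S.src e = n →
      T.f (e, []) = none →
      (∀ q, q ≠ (e, []) → T'.f q = T.f q) →
      T'.f (e, []) = some (.atom e []) →
      STrans S T T'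
  | syncCross {T T' : SState S} {l : S.Node} :
      S.sort l = .sync → S.Active T l →
      (∃ q e m, T.f q = some (.atom e m) ∧
        ((S.tgt e = some l ∧ (S.typ e).Positive) ∨
         (S.src e = l ∧ (S.typ e).Negative))) →
      (∀ e, ((S.tgt e = some l ∧ (S.typ e).Positive) ∨
             (S.src e = l ∧ (S.typ e).Negative)) →
        ∀ m, Formula.AtomOcc (S.typ e) m → ∃ q, T.f q = some (.atom e m)) →
      (∀ q e m, T.f q = some (.atom e m) → S.tgt e = some l → (S.typ e).Positive →
        ∃ e', S.src e' = l ∧ S.cIdx e' = S.pIdx e ∧ T'.f q = some (.atom e' m)) →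
      (∀ q e m, T.f q = some (.atom e m) → S.src e = l → (S.typ e).Negative →
        ∃ e', S.tgt e' = some l ∧ S.pIdx e' = S.cIdx e ∧ T'.f q = some (.atom e' m)) →
      (∀ q, (∀ e m, T.f q = some (.atom e m) →
          ¬(S.tgt e = some l ∧ (S.typ e).Positive) ∧
          ¬(S.src e = l ∧ (S.typ e).Negative)) →
        T'.f q = T.f q) →
      STrans S T T'

/-- A final state: its image consists of all the final positions together
with positions on the locks of boxes. -/
def SState.Final {S : Struct} (T : SState S) : Prop :=
  (∀ q v, T.f q = some v →
    (∃ e m, v = .atom e m ∧ S.FinPos (e, m)) ∨ (∃ e i, v = .lock e i)) ∧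
  (∀ e m, S.FinPos (e, m) → ∃ q, T.f q = some (.atom e m))

/-- The machine of `S` deadlocks: some maximal transition sequence from the
initial state ends in a non-final state. -/
def Deadlocks (S : Struct) : Prop :=
  ∃ T : SState S, Relation.ReflTransGen (STrans S) (initState S) T ∧
    (∀ T', ¬ STrans S T T') ∧ ¬ T.Final

/-- The machine of `S` is deadlock free: every maximal transition sequence
from the initial state ends in a final state. -/
def DeadlockFree (S : Struct) : Prop :=
  ∀ T : SState S, Relation.ReflTransGen (STrans S) (initState S) T →
    (∀ T', ¬ STrans S T T') → T.Final

/-! ## The closure of a net -/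

/-- A structure with a designated (main) conclusion. -/
structure PNet : Type 1 where
  S : Struct
  main : S.Edge

/-- The net consisting of a single `one`-link. -/
def oneNet : PNet where
  S :=
    { Edge := Unit
      Node := Unit
      edgeFintype := inferInstance
      nodeFintype := inferInstance
      edgeDecEq := inferInstance
      nodeDecEq := inferInstance
      typ := fun _ => .one
      sort := fun _ => .one
      src := fun _ => ()
      tgt := fun _ => none
      pIdx := fun _ => 0
      cIdx := fun _ => 0
      box := fun _ => none
      boxes := fun _ => ∅ }
  main := ()

/-- The net consisting of a single axiom of conclusions `A⊥, A`, with main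
conclusion `A`. -/
def axNet (A : Formula) : PNet where
  S :=
    { Edge := Bool
      Node := Unit
      edgeFintype := inferInstance
      nodeFintype := inferInstance
      edgeDecEq := inferInstance
      nodeDecEq := inferInstance
      typ := fun e => if e then A else A.dual
      sort := fun _ => .ax
      src := fun _ => ()
      tgt := fun _ => none
      pIdx := fun _ => 0
      cIdx := fun e => if e then 1 else 0
      box := fun _ => none
      boxes := fun _ => ∅ }
  main := true

/-- Joining the main conclusions of two nets by a binary link of sort `s`
and conclusion type `C`. -/
def joinNet (s : LinkSort) (C : Formula) (P Q : PNet) : PNet where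
  S :=
    { Edge := Option (P.S.Edge ⊕ Q.S.Edge)
      Node := Option (P.S.Node ⊕ Q.S.Node)
      edgeFintype := inferInstance
      nodeFintype := inferInstance
      edgeDecEq := inferInstance
      nodeDecEq := inferInstance
      typ := fun e =>
        match e with
        | none => C
        | some (.inl x) => P.S.typ x
        | some (.inr y) => Q.S.typ y
      sort := fun n =>
        match n with
        | none => s
        | some (.inl x) => P.S.sort x
        | some (.inr y) => Q.S.sort y
      src := fun e =>
        match e with
        | none => none
        | some (.inl x) => some (.inl (P.S.src x))
        | some (.inr y) => some (.inr (Q.S.src y))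
      tgt := fun e =>
        match e with
        | none => none
        | some (.inl x) =>
            if x = P.main then some none
            else (P.S.tgt x).map fun n => some (.inl n)
        | some (.inr y) =>
            if y = Q.main then some none
            else (Q.S.tgt y).map fun n => some (.inr n)
      pIdx := fun e =>
        match e with
        | none => 0
        | some (.inl x) => if x = P.main then 0 else P.S.pIdx x
        | some (.inr y) => if y = Q.main then 1 else Q.S.pIdx y
      cIdx := fun e =>
        match e with
        | none => 0
        | some (.inl x) => P.S.cIdx x
        | some (.inr y) => Q.S.cIdx y
      box := fun n =>
        match n with
        | none => none
        | some (.inl x) => (P.S.box x).map fun m => some (.inl m)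
        | some (.inr y) => (Q.S.box y).map fun m => some (.inr m)
      boxes := fun n =>
        match n with
        | none => ∅
        | some (.inl x) => (P.S.boxes x).image fun m => some (.inl m)
        | some (.inr y) => (Q.S.boxes y).image fun m => some (.inr m) }
  main := none

/-- The net `R°(A)`, by induction on `A`: it has conclusions `Γ, A` with no
occurrence of `⊥` in `Γ`, and main conclusion `A`. -/
def circNet : Formula → PNet
  | .one => oneNet
  | .bot => axNet .bot
  | .var n => axNet (.var n)
  | .covar n => axNet (.covar n)
  | .tens A B => joinNet .tens (.tens A B) (circNet A) (circNet B)
  | .parr A B => joinNet .parr (.parr A B) (circNet A) (circNet B)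

/-- The conclusions of `R` containing an occurrence of `⊥`. -/
abbrev BadC (R : Struct) :=
  {e : R.Edge // R.tgt e = none ∧ (R.typ e).hasBotB = true}

/-- The closure `R̂` of `R`: each conclusion `A` of `R` containing `⊥` is cut
against the main conclusion of a copy of `R°(A⊥)`. -/
def netClosure (R : Struct) : Struct where
  Edge := R.Edge ⊕ Σ e : BadC R, (circNet (R.typ e.val).dual).S.Edge
  Node := R.Node ⊕ ((Σ e : BadC R, (circNet (R.typ e.val).dual).S.Node) ⊕ BadC R)
  edgeFintype := inferInstance
  nodeFintype := inferInstance
  edgeDecEq := inferInstance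
  nodeDecEq := inferInstance
  typ := fun e =>
    match e with
    | .inl e => R.typ e
    | .inr ⟨b, x⟩ => (circNet (R.typ b.val).dual).S.typ x
  sort := fun n =>
    match n with
    | .inl n => R.sort n
    | .inr (.inl ⟨b, x⟩) => (circNet (R.typ b.val).dual).S.sort x
    | .inr (.inr _) => .cut
  src := fun e =>
    match e with
    | .inl e => .inl (R.src e)
    | .inr ⟨b, x⟩ => .inr (.inl ⟨b, (circNet (R.typ b.val).dual).S.src x⟩)
  tgt := fun e =>
    match e with
    | .inl e =>
        if h : R.tgt e = none ∧ (R.typ e).hasBotB = true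
        then some (.inr (.inr ⟨e, h⟩))
        else (R.tgt e).map Sum.inl
    | .inr ⟨b, x⟩ =>
        if x = (circNet (R.typ b.val).dual).main
        then some (.inr (.inr b))
        else ((circNet (R.typ b.val).dual).S.tgt x).map fun n => .inr (.inl ⟨b, n⟩)
  pIdx := fun e =>
    match e with
    | .inl e => R.pIdx e
    | .inr ⟨b, x⟩ =>
        if x = (circNet (R.typ b.val).dual).main then 1
        else (circNet (R.typ b.val).dual).S.pIdx x
  cIdx := fun e =>
    match e with
    | .inl e => R.cIdx e
    | .inr ⟨b, x⟩ => (circNet (R.typ b.val).dual).S.cIdx x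
  box := fun n =>
    match n with
    | .inl n => (R.box n).map Sum.inl
    | .inr (.inl ⟨b, x⟩) =>
        ((circNet (R.typ b.val).dual).S.box x).map fun m => .inr (.inl ⟨b, m⟩)
    | .inr (.inr _) => none
  boxes := fun n =>
    match n with
    | .inl n => (R.boxes n).image Sum.inl
    | .inr (.inl ⟨b, x⟩) =>
        ((circNet (R.typ b.val).dual).S.boxes x).image fun m => .inr (.inl ⟨b, m⟩)
    | .inr (.inr _) => ∅


/-! ## Auxiliary development for the termination proof -/

section SiamTerminationAux

namespace Formula

theorem dual_dual (A : Formula) : A.dual.dual = A := by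
  induction A <;> simp [dual, *]

theorem sub_dual (A : Formula) (m : Addr) :
    A.dual.sub m = (A.sub m).map dual := by
  induction A generalizing m with
  | tens B C ihB ihC => rcases m with _ | ⟨_ | _, m⟩ <;> simp [dual, sub, ihB, ihC]
  | parr B C ihB ihC => rcases m with _ | ⟨_ | _, m⟩ <;> simp [dual, sub, ihB, ihC]
  | _ => rcases m with _ | ⟨_ | _, m⟩ <;> simp [dual, sub]

theorem PosOcc.dual_neg {A : Formula} {m : Addr} (h : PosOcc A m) : NegOcc A.dual m := by
  obtain ⟨a, ha, h⟩ := h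
  refine ⟨a.dual, by rw [sub_dual, ha]; rfl, ?_⟩
  rcases h with rfl | ⟨n, rfl⟩
  · exact Or.inl rfl
  · exact Or.inr ⟨n, rfl⟩

theorem NegOcc.dual_pos {A : Formula} {m : Addr} (h : NegOcc A m) : PosOcc A.dual m := by
  obtain ⟨a, ha, h⟩ := h
  refine ⟨a.dual, by rw [sub_dual, ha]; rfl, ?_⟩
  rcases h with rfl | ⟨n, rfl⟩
  · exact Or.inl rfl
  · exact Or.inr ⟨n, rfl⟩

theorem posOcc_negOcc_false {A : Formula} {m : Addr}
    (h1 : PosOcc A m) (h2 : NegOcc A m) : False := by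
  obtain ⟨a, ha, h1⟩ := h1
  obtain ⟨b, hb, h2⟩ := h2
  rw [ha] at hb
  injection hb with hb
  subst hb
  rcases h1 with rfl | ⟨n, rfl⟩ <;> rcases h2 with h2 | ⟨k, h2⟩ <;> simp_all

theorem Positive.not_negOcc {A : Formula} (h : Positive A) :
    ∀ m, ¬ NegOcc A m := by
  induction h with
  | one =>
      rintro m ⟨a, ha, h⟩
      rcases m with _ | ⟨b, m⟩
      · cases ha; rcases h with h | ⟨n, h⟩ <;> simp_all
      · simp [sub] at ha
  | tens hA hB ihA ihB =>
      rintro m ⟨a, ha, h⟩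
      rcases m with _ | ⟨_ | _, m⟩
      · cases ha; rcases h with h | ⟨n, h⟩ <;> simp_all
      · exact ihA m ⟨a, ha, h⟩
      · exact ihB m ⟨a, ha, h⟩

theorem Negative.not_posOcc {A : Formula} (h : Negative A) :
    ∀ m, ¬ PosOcc A m := by
  induction h with
  | bot =>
      rintro m ⟨a, ha, h⟩
      rcases m with _ | ⟨b, m⟩
      · cases ha; rcases h with h | ⟨n, h⟩ <;> simp_all
      · simp [sub] at ha
  | parr hA hB ihA ihB =>
      rintro m ⟨a, ha, h⟩
      rcases m with _ | ⟨_ | _, m⟩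
      · cases ha; rcases h with h | ⟨n, h⟩ <;> simp_all
      · exact ihA m ⟨a, ha, h⟩
      · exact ihB m ⟨a, ha, h⟩

theorem Positive.not_negative {A : Formula} (h : Positive A) (h2 : Negative A) :
    False := by cases h <;> cases h2

theorem sign_clash {A : Formula} {m : Addr}
    (hp : PosOcc A m ∨ Positive A) (hn : NegOcc A m ∨ Negative A) : False := by
  rcases hp with hp | hp <;> rcases hn with hn | hn
  · exact posOcc_negOcc_false hp hn
  · exact hn.not_posOcc m hp
  · exact hp.not_negOcc m hn
  · exact hp.not_negative hn

/-- The addresses of atom occurrences of a formula, as a finite set. -/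
def atomAddrs : Formula → Finset Addr
  | one => {[]}
  | bot => {[]}
  | var _ => {[]}
  | covar _ => {[]}
  | tens A B => (A.atomAddrs.image (List.cons false)) ∪ (B.atomAddrs.image (List.cons true))
  | parr A B => (A.atomAddrs.image (List.cons false)) ∪ (B.atomAddrs.image (List.cons true))

theorem mem_atomAddrs {A : Formula} {m : Addr} (h : AtomOcc A m) :
    m ∈ A.atomAddrs := by
  induction A generalizing m with
  | tens B C ihB ihC =>
      obtain ⟨a, ha, hat⟩ := h
      rcases m with _ | ⟨_ | _, m⟩
      · cases ha; cases hat
      · exact Finset.mem_union_left _ (Finset.mem_image.2 ⟨m, ihB ⟨a, ha, hat⟩, rfl⟩)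
      · exact Finset.mem_union_right _ (Finset.mem_image.2 ⟨m, ihC ⟨a, ha, hat⟩, rfl⟩)
  | parr B C ihB ihC =>
      obtain ⟨a, ha, hat⟩ := h
      rcases m with _ | ⟨_ | _, m⟩
      · cases ha; cases hat
      · exact Finset.mem_union_left _ (Finset.mem_image.2 ⟨m, ihB ⟨a, ha, hat⟩, rfl⟩)
      · exact Finset.mem_union_right _ (Finset.mem_image.2 ⟨m, ihC ⟨a, ha, hat⟩, rfl⟩)
  | _ =>
      obtain ⟨a, ha, hat⟩ := h
      rcases m with _ | ⟨b, m⟩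
      · simp [atomAddrs]
      · simp [sub] at ha

end Formula


theorem Struct.mem_concls {R : Struct} {e : R.Edge} {n : R.Node} :
    e ∈ R.concls n ↔ R.src e = n := by simp [Struct.concls]

theorem Struct.mem_prems {R : Struct} {e : R.Edge} {n : R.Node} :
    e ∈ R.prems n ↔ R.tgt e = some n := by simp [Struct.prems]

theorem pair_resolve {α : Type*} [DecidableEq α] {x y e : α}
    (h : e ∈ ({x, y} : Finset α)) : e = x ∨ e = y := by simpa using h

/-- The one-step move relation of a single token of the SIAM. -/
inductive Move (R : Struct) : Struct.PosVal R → Struct.PosVal R → Prop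
  | ax {e e' : R.Edge} {m : Formula.Addr} :
      Formula.NegOcc (R.typ e) m → R.sort (R.src e) = .ax →
      R.src e' = R.src e → e' ≠ e → Move R (.atom e m) (.atom e' m)
  | cut {e e' : R.Edge} {m : Formula.Addr} {c : R.Node} :
      Formula.PosOcc (R.typ e) m → R.tgt e = some c → R.sort c = .cut →
      R.tgt e' = some c → e' ≠ e → Move R (.atom e m) (.atom e' m)
  | multDown {e g : R.Edge} {m : Formula.Addr} {n : R.Node} {b : Bool} :
      Formula.PosOcc (R.typ e) m → R.tgt e = some n →
      (R.sort n = .tens ∨ R.sort n = .parr) → R.src g = n →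
      R.pIdx e = (if b then 1 else 0) → Move R (.atom e m) (.atom g (b :: m))
  | multUp {e g : R.Edge} {m : Formula.Addr} {n : R.Node} {b : Bool} :
      Formula.NegOcc (R.typ g) (b :: m) → R.src g = n →
      (R.sort n = .tens ∨ R.sort n = .parr) → R.tgt e = some n →
      R.pIdx e = (if b then 1 else 0) → Move R (.atom g (b :: m)) (.atom e m)
  | lockMv {e : R.Edge} :
      R.typ e = .bot → R.sort (R.src e) = .bot → Move R (.atom e []) (.lock e 0)
  | syncPos {e e' : R.Edge} {m : Formula.Addr} {l : R.Node} :
      (R.typ e).Positive → R.tgt e = some l → R.sort l = .sync →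
      R.src e' = l → R.cIdx e' = R.pIdx e → Move R (.atom e m) (.atom e' m)
  | syncNeg {e e' : R.Edge} {m : Formula.Addr} {l : R.Node} :
      (R.typ e).Negative → R.src e = l → R.sort l = .sync →
      R.tgt e' = some l → R.pIdx e' = R.cIdx e → Move R (.atom e m) (.atom e' m)

section WFHelpers

variable {R : Struct} (hWF : R.WF)
include hWF

theorem WF.ax_spec {a : R.Node} (h : R.sort a = .ax) :
    R.prems a = ∅ ∧ ∃ e f, e ≠ f ∧ R.concls a = {e, f} ∧ R.typ f = (R.typ e).dual :=
  hWF.1 a h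

theorem WF.cut_spec {c : R.Node} (h : R.sort c = .cut) :
    R.concls c = ∅ ∧ ∃ e f, e ≠ f ∧ R.prems c = {e, f} ∧ R.typ f = (R.typ e).dual :=
  hWF.2.1 c h

theorem WF.one_spec {n : R.Node} (h : R.sort n = .one) :
    R.prems n = ∅ ∧ ∃ e, R.concls n = {e} ∧ R.typ e = .one :=
  hWF.2.2.2.2.1 n h

theorem WF.sync_spec {n : R.Node} (h : R.sort n = .sync) :
    (∀ e ∈ R.prems n, (R.typ e).Polarized) ∧
    (∀ e ∈ R.prems n, ∃! f, f ∈ R.concls n ∧ R.cIdx f = R.pIdx e) ∧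
    (∀ f ∈ R.concls n, ∃! e, e ∈ R.prems n ∧ R.pIdx e = R.cIdx f) ∧
    (∀ e ∈ R.prems n, ∀ f ∈ R.concls n, R.cIdx f = R.pIdx e → R.typ f = R.typ e) :=
  hWF.2.2.2.2.2.2.1 n h

theorem WF.mult_spec {n : R.Node} (hn : R.sort n = .tens ∨ R.sort n = .parr) :
    ∃ x y g, x ≠ y ∧ R.prems n = {x, y} ∧ R.pIdx x = 0 ∧ R.pIdx y = 1 ∧
      R.concls n = {g} ∧ ∀ (b : Bool) (m : Formula.Addr),
        (R.typ g).sub (b :: m) = (R.typ (if b then y else x)).sub m := by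
  rcases hn with hn | hn
  · obtain ⟨x, y, g, hxy, h1, h2, h3, h4, h5⟩ := hWF.2.2.1 n hn
    exact ⟨x, y, g, hxy, h1, h2, h3, h4, fun b m => by rw [h5]; cases b <;> rfl⟩
  · obtain ⟨x, y, g, hxy, h1, h2, h3, h4, h5⟩ := hWF.2.2.2.1 n hn
    exact ⟨x, y, g, hxy, h1, h2, h3, h4, fun b m => by rw [h5]; cases b <;> rfl⟩

theorem WF.one_concl_typ {e : R.Edge} (he : R.sort (R.src e) = .one) :
    R.typ e = .one := by
  obtain ⟨-, e₀, hc, ht⟩ := WF.one_spec hWF he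
  have h : e ∈ R.concls (R.src e) := Struct.mem_concls.2 rfl
  rw [hc] at h
  simp only [Finset.mem_singleton] at h
  rw [h]; exact ht

omit hWF in
theorem prem_by_idx {R : Struct} {x y e : R.Edge} {b : Bool}
    (hx : R.pIdx x = 0) (hy : R.pIdx y = 1) (he : e = x ∨ e = y)
    (hb : R.pIdx e = (if b then 1 else 0)) : e = if b then y else x := by
  cases b <;> rcases he with rfl | rfl <;> simp_all

theorem WF.ax_other_typ {a : R.Node} {e f : R.Edge} (ha : R.sort a = .ax)
    (he : R.src e = a) (hf : R.src f = a) (hne : f ≠ e) :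
    R.typ f = (R.typ e).dual := by
  obtain ⟨-, x, y, hxy, hc, hd⟩ := WF.ax_spec hWF ha
  have he' : e ∈ R.concls a := Struct.mem_concls.2 he
  have hf' : f ∈ R.concls a := Struct.mem_concls.2 hf
  rw [hc] at he' hf'
  rcases pair_resolve he' with rfl | rfl <;> rcases pair_resolve hf' with rfl | rfl
  · exact absurd rfl hne
  · exact hd
  · rw [hd, Formula.dual_dual]
  · exact absurd rfl hne

theorem WF.ax_other_unique {a : R.Node} {e f₁ f₂ : R.Edge} (ha : R.sort a = .ax)
    (he : R.src e = a) (hf₁ : R.src f₁ = a) (hf₂ : R.src f₂ = a)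
    (hne₁ : f₁ ≠ e) (hne₂ : f₂ ≠ e) : f₁ = f₂ := by
  obtain ⟨-, x, y, hxy, hc, -⟩ := WF.ax_spec hWF ha
  have he' : e ∈ R.concls a := Struct.mem_concls.2 he
  have hf₁' : f₁ ∈ R.concls a := Struct.mem_concls.2 hf₁
  have hf₂' : f₂ ∈ R.concls a := Struct.mem_concls.2 hf₂
  rw [hc] at he' hf₁' hf₂'
  rcases pair_resolve he' with rfl | rfl <;>
    rcases pair_resolve hf₁' with rfl | rfl <;>
    rcases pair_resolve hf₂' with rfl | rfl <;> simp_all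

theorem WF.cut_other_typ {c : R.Node} {e f : R.Edge} (hc : R.sort c = .cut)
    (he : R.tgt e = some c) (hf : R.tgt f = some c) (hne : f ≠ e) :
    R.typ f = (R.typ e).dual := by
  obtain ⟨-, x, y, hxy, hp, hd⟩ := WF.cut_spec hWF hc
  have he' : e ∈ R.prems c := Struct.mem_prems.2 he
  have hf' : f ∈ R.prems c := Struct.mem_prems.2 hf
  rw [hp] at he' hf'
  rcases pair_resolve he' with rfl | rfl <;> rcases pair_resolve hf' with rfl | rfl
  · exact absurd rfl hne
  · exact hd
  · rw [hd, Formula.dual_dual]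
  · exact absurd rfl hne

theorem WF.cut_other_unique {c : R.Node} {e f₁ f₂ : R.Edge} (hc : R.sort c = .cut)
    (he : R.tgt e = some c) (hf₁ : R.tgt f₁ = some c) (hf₂ : R.tgt f₂ = some c)
    (hne₁ : f₁ ≠ e) (hne₂ : f₂ ≠ e) : f₁ = f₂ := by
  obtain ⟨-, x, y, hxy, hp, -⟩ := WF.cut_spec hWF hc
  have he' : e ∈ R.prems c := Struct.mem_prems.2 he
  have hf₁' : f₁ ∈ R.prems c := Struct.mem_prems.2 hf₁
  have hf₂' : f₂ ∈ R.prems c := Struct.mem_prems.2 hf₂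
  rw [hp] at he' hf₁' hf₂'
  rcases pair_resolve he' with rfl | rfl <;>
    rcases pair_resolve hf₁' with rfl | rfl <;>
    rcases pair_resolve hf₂' with rfl | rfl <;> simp_all

theorem WF.sync_typ_eq {l : R.Node} {e f : R.Edge} (hl : R.sort l = .sync)
    (he : R.tgt e = some l) (hf : R.src f = l) (hidx : R.cIdx f = R.pIdx e) :
    R.typ f = R.typ e :=
  (WF.sync_spec hWF hl).2.2.2 e (Struct.mem_prems.2 he) f (Struct.mem_concls.2 hf) hidx

theorem WF.sync_prem_unique {l : R.Node} {f e₁ e₂ : R.Edge} (hl : R.sort l = .sync)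
    (hf : R.src f = l) (h1 : R.tgt e₁ = some l) (h2 : R.tgt e₂ = some l)
    (hi1 : R.pIdx e₁ = R.cIdx f) (hi2 : R.pIdx e₂ = R.cIdx f) : e₁ = e₂ := by
  obtain ⟨u, -, huniq⟩ := (WF.sync_spec hWF hl).2.2.1 f (Struct.mem_concls.2 hf)
  exact (huniq e₁ ⟨Struct.mem_prems.2 h1, hi1⟩).trans
    (huniq e₂ ⟨Struct.mem_prems.2 h2, hi2⟩).symm

theorem WF.sync_concl_unique {l : R.Node} {e f₁ f₂ : R.Edge} (hl : R.sort l = .sync)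
    (he : R.tgt e = some l) (h1 : R.src f₁ = l) (h2 : R.src f₂ = l)
    (hi1 : R.cIdx f₁ = R.pIdx e) (hi2 : R.cIdx f₂ = R.pIdx e) : f₁ = f₂ := by
  obtain ⟨u, -, huniq⟩ := (WF.sync_spec hWF hl).2.1 e (Struct.mem_prems.2 he)
  exact (huniq f₁ ⟨Struct.mem_concls.2 h1, hi1⟩).trans
    (huniq f₂ ⟨Struct.mem_concls.2 h2, hi2⟩).symm


theorem WF.ax_target_pos {e e' : R.Edge} {m : Formula.Addr}
    (hocc : Formula.NegOcc (R.typ e) m) (hs : R.sort (R.src e) = .ax)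
    (hsrc : R.src e' = R.src e) (hne : e' ≠ e) :
    Formula.PosOcc (R.typ e') m := by
  have h := WF.ax_other_typ hWF hs rfl hsrc hne
  rw [h]; exact hocc.dual_pos

theorem WF.cut_target_neg {e e' : R.Edge} {m : Formula.Addr} {c : R.Node}
    (hocc : Formula.PosOcc (R.typ e) m) (ht : R.tgt e = some c)
    (hs : R.sort c = .cut) (ht' : R.tgt e' = some c) (hne : e' ≠ e) :
    Formula.NegOcc (R.typ e') m := by
  have h := WF.cut_other_typ hWF hs ht ht' hne
  rw [h]; exact hocc.dual_neg

theorem WF.multDown_target_pos {e g : R.Edge} {m : Formula.Addr} {n : R.Node} {b : Bool}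
    (hocc : Formula.PosOcc (R.typ e) m) (ht : R.tgt e = some n)
    (hn : R.sort n = .tens ∨ R.sort n = .parr) (hg : R.src g = n)
    (hb : R.pIdx e = (if b then 1 else 0)) :
    Formula.PosOcc (R.typ g) (b :: m) := by
  obtain ⟨x, y, g0, hxy, hp, hx, hy, hc, hsub⟩ := WF.mult_spec hWF hn
  have hg0 : g = g0 := by
    have h := Struct.mem_concls.2 hg; rw [hc] at h; simpa using h
  have hmem : e = x ∨ e = y := by
    have h := Struct.mem_prems.2 ht; rw [hp] at h; exact pair_resolve h
  have he : e = if b then y else x := prem_by_idx hx hy hmem hb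
  obtain ⟨a, ha, hsign⟩ := hocc
  exact ⟨a, by rw [hg0, hsub b m, ← he]; exact ha, hsign⟩

theorem WF.multUp_target_neg {e g : R.Edge} {m : Formula.Addr} {n : R.Node} {b : Bool}
    (hocc : Formula.NegOcc (R.typ g) (b :: m)) (hg : R.src g = n)
    (hn : R.sort n = .tens ∨ R.sort n = .parr) (ht : R.tgt e = some n)
    (hb : R.pIdx e = (if b then 1 else 0)) :
    Formula.NegOcc (R.typ e) m := by
  obtain ⟨x, y, g0, hxy, hp, hx, hy, hc, hsub⟩ := WF.mult_spec hWF hn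
  have hg0 : g = g0 := by
    have h := Struct.mem_concls.2 hg; rw [hc] at h; simpa using h
  have hmem : e = x ∨ e = y := by
    have h := Struct.mem_prems.2 ht; rw [hp] at h; exact pair_resolve h
  have he : e = if b then y else x := prem_by_idx hx hy hmem hb
  obtain ⟨a, ha, hsign⟩ := hocc
  refine ⟨a, ?_, hsign⟩
  rw [he, ← hsub b m, ← hg0]; exact ha

omit hWF in
theorem no_self_loop {R : Struct} (hC : R.Correct) {e : R.Edge} {l : R.Node}
    (ht : R.tgt e = some l) (hs : R.src e = l) : False := by
  apply hC (R.box l)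
  have hrep : R.RepAt (R.box l) l l := Or.inl ⟨rfl, rfl⟩
  haveI : Subsingleton (Fin (0 + 1)) :=
    ⟨fun a b => by have ha := a.isLt; have hb := b.isLt; apply Fin.ext; omega⟩
  refine ⟨0, fun _ => l, fun _ => e, fun a b _ => Subsingleton.elim a b,
    fun a b _ => Subsingleton.elim a b, fun i => ?_,
    fun p _ a _ b _ => Subsingleton.elim a b, fun p _ a _ b _ => Subsingleton.elim a b⟩
  exact ⟨l, ht, Or.inl rfl, Or.inl ⟨Or.inl ⟨by rw [hs], hs.symm⟩, hrep⟩⟩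

omit hWF in
theorem move_src_atom {R : Struct} {u v : Struct.PosVal R} (h : Move R u v) :
    ∃ e m, u = .atom e m := by
  cases h <;> exact ⟨_, _, rfl⟩


omit hWF in
theorem move_into_lock {u : Struct.PosVal R} {e : R.Edge} {i : ℕ}
    (h : Move R u (.lock e i)) : u = .atom e [] := by
  cases h; rfl

theorem move_inv {v : Struct.PosVal R} {f : R.Edge} {mm : Formula.Addr}
    (h : Move R v (.atom f mm)) :
    (R.sort (R.src f) = .ax ∧ Formula.PosOcc (R.typ f) mm ∧
       ∃ e, v = .atom e mm ∧ R.src e = R.src f ∧ f ≠ e) ∨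
    ((R.sort (R.src f) = .tens ∨ R.sort (R.src f) = .parr) ∧
       Formula.PosOcc (R.typ f) mm ∧
       ∃ e b m', mm = b :: m' ∧ v = .atom e m' ∧ R.tgt e = some (R.src f) ∧
         R.pIdx e = (if b then 1 else 0)) ∨
    (R.sort (R.src f) = .sync ∧ (R.typ f).Positive ∧
       ∃ e, v = .atom e mm ∧ R.tgt e = some (R.src f) ∧ R.pIdx e = R.cIdx f) ∨
    (∃ c, R.tgt f = some c ∧ R.sort c = .cut ∧ Formula.NegOcc (R.typ f) mm ∧
       ∃ e, v = .atom e mm ∧ R.tgt e = some c ∧ f ≠ e) ∨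
    (∃ n, R.tgt f = some n ∧ (R.sort n = .tens ∨ R.sort n = .parr) ∧
       Formula.NegOcc (R.typ f) mm ∧
       ∃ g b, v = .atom g (b :: mm) ∧ R.src g = n ∧ R.pIdx f = (if b then 1 else 0)) ∨
    (∃ l, R.tgt f = some l ∧ R.sort l = .sync ∧ (R.typ f).Negative ∧
       ∃ e, v = .atom e mm ∧ R.src e = l ∧ R.cIdx e = R.pIdx f) := by
  cases h
  case ax =>
    rename_i e h2 h3 h4 h1
    exact Or.inl ⟨by rw [h3]; exact h2, WF.ax_target_pos hWF h1 h2 h3 h4,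
      e, rfl, h3.symm, h4⟩
  case cut =>
    rename_i e c h2 h3 h4 h5 h1
    exact Or.inr (Or.inr (Or.inr (Or.inl ⟨c, h4, h3,
      WF.cut_target_neg hWF h1 h2 h3 h4 h5, e, rfl, h2, h5⟩)))
  case multDown =>
    rename_i e m n b h1 h2 h3 hp hg
    exact Or.inr (Or.inl ⟨by rw [hg]; exact h3,
      WF.multDown_target_pos hWF h1 h2 h3 hg hp,
      e, b, m, rfl, rfl, by rw [hg]; exact h2, hp⟩)
  case multUp =>
    rename_i g n b hg h3 h4 hp h1
    exact Or.inr (Or.inr (Or.inr (Or.inr (Or.inl ⟨n, h4, h3,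
      WF.multUp_target_neg hWF h1 hg h3 h4 hp, g, b, rfl, hg, hp⟩))))
  case syncPos =>
    rename_i e l h1 h2 h3 h4 h5
    exact Or.inr (Or.inr (Or.inl ⟨by rw [h4]; exact h3,
      by rw [WF.sync_typ_eq hWF h3 h2 h4 h5]; exact h1,
      e, rfl, by rw [h4]; exact h2, h5.symm⟩))
  case syncNeg =>
    rename_i e l h1 h2 h3 h4 h5
    exact Or.inr (Or.inr (Or.inr (Or.inr (Or.inr ⟨l, h4, h3,
      by rw [← WF.sync_typ_eq hWF h3 h4 h2 h5.symm]; exact h1,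
      e, rfl, h2, h5.symm⟩))))

theorem move_inj {u v c : Struct.PosVal R} (hu : Move R u c) (hv : Move R v c) :
    u = v := by
  cases c with
  | lock e i => rw [move_into_lock hu, move_into_lock hv]
  | atom f mm =>
    have h1 := move_inv hWF hu
    have h2 := move_inv hWF hv
    clear hu hv
    rcases h1 with ⟨s1, o1, e₁, rfl, he1, hne1⟩ |
        ⟨s1, o1, e₁, b₁, m₁, hmm1, hv1, he1, hb1⟩ |
        ⟨s1, o1, e₁, rfl, he1, hb1⟩ |
        ⟨c₁, hc1, s1, o1, e₁, rfl, he1, hne1⟩ |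
        ⟨n₁, hn1, s1, o1, g₁, b₁, rfl, hg1, hb1⟩ |
        ⟨l₁, hl1, s1, o1, e₁, rfl, he1, hi1⟩
    -- u from rule 1 (ax)
    · rcases h2 with ⟨s2, o2, e₂, rfl, he2, hne2⟩ |
          ⟨s2, o2, e₂, b₂, m₂, hmm2, hv2, he2, hb2⟩ |
          ⟨s2, o2, e₂, rfl, he2, hb2⟩ |
          ⟨c₂, hc2, s2, o2, e₂, rfl, he2, hne2⟩ |
          ⟨n₂, hn2, s2, o2, g₂, b₂, rfl, hg2, hb2⟩ |
          ⟨l₂, hl2, s2, o2, e₂, rfl, he2, hi2⟩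
      · rw [WF.ax_other_unique hWF s1 rfl he1 he2 (Ne.symm hne1) (Ne.symm hne2)]
      · rcases s2 with s2 | s2 <;> simp_all
      · simp_all
      · exact (Formula.sign_clash (m := mm) (Or.inl o1) (Or.inl o2)).elim
      · exact (Formula.sign_clash (m := mm) (Or.inl o1) (Or.inl o2)).elim
      · exact (Formula.sign_clash (m := mm) (Or.inl o1) (Or.inr o2)).elim
    -- u from rule 2 (mult down)
    · rcases h2 with ⟨s2, o2, e₂, rfl, he2, hne2⟩ |
          ⟨s2, o2, e₂, b₂, m₂, hmm2, hv2, he2, hb2⟩ |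
          ⟨s2, o2, e₂, rfl, he2, hb2⟩ |
          ⟨c₂, hc2, s2, o2, e₂, rfl, he2, hne2⟩ |
          ⟨n₂, hn2, s2, o2, g₂, b₂, rfl, hg2, hb2⟩ |
          ⟨l₂, hl2, s2, o2, e₂, rfl, he2, hi2⟩
      · rcases s1 with s1 | s1 <;> simp_all
      · rw [hmm1] at hmm2
        injection hmm2 with hb hm
        subst hb; subst hm
        obtain ⟨x, y, g0, hxy, hp, hx, hy, hc, hsub⟩ := WF.mult_spec hWF s1
        have hm1 : e₁ = x ∨ e₁ = y := by
          have h := Struct.mem_prems.2 he1; rw [hp] at h; exact pair_resolve h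
        have hm2 : e₂ = x ∨ e₂ = y := by
          have h := Struct.mem_prems.2 he2; rw [hp] at h; exact pair_resolve h
        rw [hv1, hv2, prem_by_idx hx hy hm1 hb1, prem_by_idx hx hy hm2 hb2]
      · rcases s1 with s1 | s1 <;> simp_all
      · exact (Formula.sign_clash (m := mm) (Or.inl o1) (Or.inl o2)).elim
      · exact (Formula.sign_clash (m := mm) (Or.inl o1) (Or.inl o2)).elim
      · exact (Formula.sign_clash (m := mm) (Or.inl o1) (Or.inr o2)).elim
    -- u from rule 3 (sync, positive)
    · rcases h2 with ⟨s2, o2, e₂, rfl, he2, hne2⟩ |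
          ⟨s2, o2, e₂, b₂, m₂, hmm2, hv2, he2, hb2⟩ |
          ⟨s2, o2, e₂, rfl, he2, hb2⟩ |
          ⟨c₂, hc2, s2, o2, e₂, rfl, he2, hne2⟩ |
          ⟨n₂, hn2, s2, o2, g₂, b₂, rfl, hg2, hb2⟩ |
          ⟨l₂, hl2, s2, o2, e₂, rfl, he2, hi2⟩
      · simp_all
      · rcases s2 with s2 | s2 <;> simp_all
      · rw [WF.sync_prem_unique hWF s1 rfl he1 he2 hb1 hb2]
      · exact (Formula.sign_clash (m := mm) (Or.inr o1) (Or.inl o2)).elim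
      · exact (Formula.sign_clash (m := mm) (Or.inr o1) (Or.inl o2)).elim
      · exact (Formula.sign_clash (m := mm) (Or.inr o1) (Or.inr o2)).elim
    -- u from rule 4 (cut)
    · rcases h2 with ⟨s2, o2, e₂, rfl, he2, hne2⟩ |
          ⟨s2, o2, e₂, b₂, m₂, hmm2, hv2, he2, hb2⟩ |
          ⟨s2, o2, e₂, rfl, he2, hb2⟩ |
          ⟨c₂, hc2, s2, o2, e₂, rfl, he2, hne2⟩ |
          ⟨n₂, hn2, s2, o2, g₂, b₂, rfl, hg2, hb2⟩ |
          ⟨l₂, hl2, s2, o2, e₂, rfl, he2, hi2⟩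
      · exact (Formula.sign_clash (m := mm) (Or.inl o2) (Or.inl o1)).elim
      · exact (Formula.sign_clash (m := mm) (Or.inl o2) (Or.inl o1)).elim
      · exact (Formula.sign_clash (m := mm) (Or.inr o2) (Or.inl o1)).elim
      · rw [hc1] at hc2
        injection hc2 with hc2
        subst hc2
        rw [WF.cut_other_unique hWF s1 hc1 he1 he2 (Ne.symm hne1) (Ne.symm hne2)]
      · rw [hc1] at hn2
        injection hn2 with hn2
        rcases s2 with s2 | s2 <;> rw [hn2] at s1 <;> simp_all
      · rw [hc1] at hl2
        injection hl2 with hl2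
        rw [hl2] at s1; simp_all
    -- u from rule 5 (mult up)
    · rcases h2 with ⟨s2, o2, e₂, rfl, he2, hne2⟩ |
          ⟨s2, o2, e₂, b₂, m₂, hmm2, hv2, he2, hb2⟩ |
          ⟨s2, o2, e₂, rfl, he2, hb2⟩ |
          ⟨c₂, hc2, s2, o2, e₂, rfl, he2, hne2⟩ |
          ⟨n₂, hn2, s2, o2, g₂, b₂, rfl, hg2, hb2⟩ |
          ⟨l₂, hl2, s2, o2, e₂, rfl, he2, hi2⟩
      · exact (Formula.sign_clash (m := mm) (Or.inl o2) (Or.inl o1)).elim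
      · exact (Formula.sign_clash (m := mm) (Or.inl o2) (Or.inl o1)).elim
      · exact (Formula.sign_clash (m := mm) (Or.inr o2) (Or.inl o1)).elim
      · rw [hn1] at hc2
        injection hc2 with hc2
        rcases s1 with s1 | s1 <;> rw [← hc2] at s2 <;> simp_all
      · rw [hn1] at hn2
        injection hn2 with hn2
        subst hn2
        obtain ⟨x, y, g0, hxy, hp, hx, hy, hc, hsub⟩ := WF.mult_spec hWF s1
        have hgg1 : g₁ = g0 := by
          have h := Struct.mem_concls.2 hg1; rw [hc] at h; simpa using h
        have hgg2 : g₂ = g0 := by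
          have h := Struct.mem_concls.2 hg2; rw [hc] at h; simpa using h
        have hbb : b₁ = b₂ := by
          rw [hb1] at hb2; cases b₁ <;> cases b₂ <;> simp_all
        rw [hgg1, hgg2, hbb]
      · rw [hn1] at hl2
        injection hl2 with hl2
        rcases s1 with s1 | s1 <;> rw [hl2] at s1 <;> simp_all
    -- u from rule 6 (sync, negative)
    · rcases h2 with ⟨s2, o2, e₂, rfl, he2, hne2⟩ |
          ⟨s2, o2, e₂, b₂, m₂, hmm2, hv2, he2, hb2⟩ |
          ⟨s2, o2, e₂, rfl, he2, hb2⟩ |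
          ⟨c₂, hc2, s2, o2, e₂, rfl, he2, hne2⟩ |
          ⟨n₂, hn2, s2, o2, g₂, b₂, rfl, hg2, hb2⟩ |
          ⟨l₂, hl2, s2, o2, e₂, rfl, he2, hi2⟩
      · exact (Formula.sign_clash (m := mm) (Or.inl o2) (Or.inr o1)).elim
      · exact (Formula.sign_clash (m := mm) (Or.inl o2) (Or.inr o1)).elim
      · exact (Formula.sign_clash (m := mm) (Or.inr o2) (Or.inr o1)).elim
      · rw [hl1] at hc2
        injection hc2 with hc2
        rw [← hc2] at s2; simp_all
      · rw [hl1] at hn2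
        injection hn2 with hn2
        rcases s2 with s2 | s2 <;> rw [hn2] at s1 <;> simp_all
      · rw [hl1] at hl2
        injection hl2 with hl2
        subst hl2
        rw [WF.sync_concl_unique hWF s1 hl1 he1 he2 hi1 hi2]


theorem init_not_target {p : R.Edge × Formula.Addr} (hp : R.InitPos p)
    (u : Struct.PosVal R) : ¬ Move R u (.atom p.1 p.2) := by
  intro h
  obtain ⟨htgt, hocc⟩ := hp
  rcases move_inv hWF h with ⟨-, o, -⟩ | ⟨-, o, -⟩ | ⟨-, o, -⟩ |
      ⟨c, hc, -⟩ | ⟨n, hn, -⟩ | ⟨l, hl, -⟩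
  · exact Formula.posOcc_negOcc_false o hocc
  · exact Formula.posOcc_negOcc_false o hocc
  · exact o.not_negOcc _ hocc
  · rw [htgt] at hc; cases hc
  · rw [htgt] at hn; cases hn
  · rw [htgt] at hl; cases hl

theorem spawn_not_target {e : R.Edge} (he : R.sort (R.src e) = .one)
    (u : Struct.PosVal R) : ¬ Move R u (.atom e []) := by
  intro h
  have ht : R.typ e = .one := WF.one_concl_typ hWF he
  have hpos : Formula.Positive (R.typ e) := by rw [ht]; exact Formula.Positive.one
  rcases move_inv hWF h with ⟨s, -⟩ | ⟨s, -⟩ | ⟨s, -⟩ |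
      ⟨c, -, -, o, -⟩ | ⟨n, -, -, o, -⟩ | ⟨l, -, -, o, -⟩
  · rw [he] at s; simp at s
  · rcases s with s | s <;> rw [he] at s <;> simp at s
  · rw [he] at s; simp at s
  · exact hpos.not_negOcc _ o
  · exact hpos.not_negOcc _ o
  · exact hpos.not_negative o

omit hWF in
theorem step_moves_sync {T T' : SState R} {l : R.Node} (h1 : R.sort l = .sync)
    (h5 : ∀ q e m, T.f q = some (.atom e m) → R.tgt e = some l → (R.typ e).Positive →
      ∃ e', R.src e' = l ∧ R.cIdx e' = R.pIdx e ∧ T'.f q = some (.atom e' m))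
    (h6 : ∀ q e m, T.f q = some (.atom e m) → R.src e = l → (R.typ e).Negative →
      ∃ e', R.tgt e' = some l ∧ R.pIdx e' = R.cIdx e ∧ T'.f q = some (.atom e' m))
    (h7 : ∀ q, (∀ e m, T.f q = some (.atom e m) →
        ¬(R.tgt e = some l ∧ (R.typ e).Positive) ∧
        ¬(R.src e = l ∧ (R.typ e).Negative)) → T'.f q = T.f q)
    (q : R.Edge × Formula.Addr) :
    T'.f q = T.f q ∨
    (∃ v w, T.f q = some v ∧ T'.f q = some w ∧ Move R v w) := by
  classical
  rcases hq : T.f q with - | v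
  · exact Or.inl ((h7 q (by intro e m hh; rw [hq] at hh; cases hh)).trans hq)
  · cases v with
    | lock e i =>
      refine Or.inl ((h7 q ?_).trans hq)
      intro e' m' hh; rw [hq] at hh; simp at hh
    | atom e m =>
      by_cases hp1 : R.tgt e = some l ∧ (R.typ e).Positive
      · obtain ⟨e', he1, he2, he3⟩ := h5 q e m hq hp1.1 hp1.2
        exact Or.inr ⟨_, _, rfl, he3, Move.syncPos hp1.2 hp1.1 h1 he1 he2⟩
      · by_cases hp2 : R.src e = l ∧ (R.typ e).Negative
        · obtain ⟨e', he1, he2, he3⟩ := h6 q e m hq hp2.1 hp2.2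
          exact Or.inr ⟨_, _, rfl, he3, Move.syncNeg hp2.2 hp2.1 h1 he1 he2⟩
        · refine Or.inl ((h7 q ?_).trans hq)
          intro e' m' hh
          rw [hq] at hh
          injection hh with hh
          injection hh with hh1 hh2
          subst hh1; subst hh2
          exact ⟨hp1, hp2⟩

omit hWF in
theorem step_moves {T T' : SState R} (h : STrans R T T')
    (q : R.Edge × Formula.Addr) :
    T'.f q = T.f q ∨
    (∃ v w, T.f q = some v ∧ T'.f q = some w ∧ Move R v w) ∨
    (T.f q = none ∧ ∃ e, q = (e, []) ∧ R.sort (R.src e) = .one ∧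
      T'.f q = some (.atom e [])) := by
  classical
  cases h
  case axUp p e e' m a h1 h2 h3 h4 h5 h6 h7 hfr h9 =>
    rcases eq_or_ne q p with rfl | hq
    · exact Or.inr (Or.inl ⟨_, _, h1, h9,
        Move.ax h2 (by rw [h3]; exact h4) (by rw [h6, h3]) h7⟩)
    · exact Or.inl (hfr q hq)
  case cutDown p e e' m c h1 h2 h3 h4 h5 h6 h7 hfr h9 =>
    rcases eq_or_ne q p with rfl | hq
    · exact Or.inr (Or.inl ⟨_, _, h1, h9, Move.cut h2 h3 h4 h6 h7⟩)
    · exact Or.inl (hfr q hq)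
  case multDown p e g m n b h1 h2 h3 h4 h5 h6 h7 hfr h9 =>
    rcases eq_or_ne q p with rfl | hq
    · exact Or.inr (Or.inl ⟨_, _, h1, h9, Move.multDown h2 h3 h4 h6 h7⟩)
    · exact Or.inl (hfr q hq)
  case multUp p e g m n b h1 h2 h3 h4 h5 h6 h7 hfr h9 =>
    rcases eq_or_ne q p with rfl | hq
    · exact Or.inr (Or.inl ⟨_, _, h1, h9, Move.multUp h2 h3 h4 h6 h7⟩)
    · exact Or.inl (hfr q hq)
  case lockTok p e b' h1 h2 h3 h4 h5 hfr h7 =>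
    rcases eq_or_ne q p with rfl | hq
    · exact Or.inr (Or.inl ⟨_, _, h1, h7, Move.lockMv h2 (by rw [h3]; exact h4)⟩)
    · exact Or.inl (hfr q hq)
  case oneSpawn n e h1 h2 h3 h4 hfr h6 =>
    rcases eq_or_ne q (e, []) with rfl | hq
    · exact Or.inr (Or.inr ⟨h4, e, rfl, by rw [h3]; exact h1, h6⟩)
    · exact Or.inl (hfr q hq)
  case syncCross l h1 h2 h3 h4 h5 h6 h7 =>
    rcases step_moves_sync h1 h5 h6 h7 q with h | h
    · exact Or.inl h
    · exact Or.inr (Or.inl h)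

omit hWF in
theorem step_change (hC : R.Correct) {T T' : SState R} (h : STrans R T T') :
    (∃ q v w, T.f q = some v ∧ T'.f q = some w ∧ v ≠ w) ∨
    (∃ q, T.f q = none ∧ T'.f q ≠ none) := by
  cases h
  case axUp p e e' m a h1 h2 h3 h4 h5 h6 h7 hfr h9 =>
    refine Or.inl ⟨p, _, _, h1, h9, fun hvw => h7 ?_⟩
    injection hvw with hvw _; exact hvw.symm
  case cutDown p e e' m c h1 h2 h3 h4 h5 h6 h7 hfr h9 =>
    refine Or.inl ⟨p, _, _, h1, h9, fun hvw => h7 ?_⟩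
    injection hvw with hvw _; exact hvw.symm
  case multDown p e g m n b h1 h2 h3 h4 h5 h6 h7 hfr h9 =>
    refine Or.inl ⟨p, _, _, h1, h9, fun hvw => ?_⟩
    injection hvw with _ hvw
    exact List.cons_ne_self b m hvw.symm
  case multUp p e g m n b h1 h2 h3 h4 h5 h6 h7 hfr h9 =>
    refine Or.inl ⟨p, _, _, h1, h9, fun hvw => ?_⟩
    injection hvw with _ hvw
    exact List.cons_ne_self b m hvw
  case lockTok p e b' h1 h2 h3 h4 h5 hfr h7 =>
    exact Or.inl ⟨p, _, _, h1, h7, fun hvw => by cases hvw⟩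
  case oneSpawn n e h1 h2 h3 h4 hfr h6 =>
    exact Or.inr ⟨(e, []), h4, by rw [h6]; exact Option.some_ne_none _⟩
  case syncCross l h1 h2 h3 h4 h5 h6 h7 =>
    obtain ⟨q, e, m, hq, hcase⟩ := h3
    rcases hcase with ⟨ht, hpos⟩ | ⟨hsrc, hneg⟩
    · obtain ⟨e', he1, he2, he3⟩ := h5 q e m hq ht hpos
      refine Or.inl ⟨q, _, _, hq, he3, fun hvw => ?_⟩
      injection hvw with hvw _
      subst hvw
      exact no_self_loop hC ht he1
    · obtain ⟨e', he1, he2, he3⟩ := h6 q e m hq hsrc hneg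
      refine Or.inl ⟨q, _, _, hq, he3, fun hvw => ?_⟩
      injection hvw with hvw _
      subst hvw
      exact no_self_loop hC he1 hsrc

end WFHelpers

end SiamTerminationAux

/-- The finite set of candidate token origins / atom positions. -/
def tokSet (R : Struct) : Finset (R.Edge × Formula.Addr) :=
  Finset.univ.biUnion fun e =>
    (insert [] (Formula.atomAddrs (R.typ e))).image fun m => (e, m)

theorem mem_tokSet_of {R : Struct} {p : R.Edge × Formula.Addr}
    (h : Formula.AtomOcc (R.typ p.1) p.2 ∨ p.2 = []) : p ∈ tokSet R := by
  obtain ⟨e, m⟩ := p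
  refine Finset.mem_biUnion.2 ⟨e, Finset.mem_univ _, Finset.mem_image.2 ⟨m, ?_, rfl⟩⟩
  rcases h with h | h
  · exact Finset.mem_insert_of_mem (Formula.mem_atomAddrs h)
  · exact h ▸ Finset.mem_insert_self _ _

/-- Abstract lemma: an eventually-injective orbit along an injective relation,
starting outside the range, cannot change infinitely often within a finite set. -/
theorem orbit_false {α : Type*} (M : α → α → Prop)
    (hinj : ∀ {a b c : α}, M a c → M b c → a = b)
    (w : ℕ → α) (h0 : ∀ u, ¬ M u (w 0))
    (hstep : ∀ n, w (n + 1) = w n ∨ M (w n) (w (n + 1)))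
    (hinf : {n | w (n + 1) ≠ w n}.Infinite)
    (hfin : {a | a ∈ Set.range w ∧ ∃ b, M a b}.Finite) : False := by
  classical
  let c : ℕ → ℕ := fun n =>
    Nat.rec 0 (fun k ih => if w (k + 1) = w k then ih else ih + 1) n
  have hc0 : c 0 = 0 := rfl
  have hcs : ∀ n, c (n + 1) = if w (n + 1) = w n then c n else c n + 1 := fun n => rfl
  have hmono : Monotone c := by
    apply monotone_nat_of_le_succ
    intro n; rw [hcs n]; split <;> omega
  have hconst : ∀ n d, c (n + d) = c n → w (n + d) = w n := by
    intro n d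
    induction d with
    | zero => intro _; rfl
    | succ d ih =>
      intro h
      have h1 : c (n + d) = c n := by
        have ha : c (n + d) ≤ c (n + (d + 1)) := hmono (Nat.le_succ (n + d))
        have hb : c n ≤ c (n + d) := hmono (Nat.le_add_right n d)
        omega
      have h2 : c ((n + d) + 1) = c (n + d) := by
        have heq : n + (d + 1) = (n + d) + 1 := by omega
        rw [heq] at h
        omega
      have h3 : w ((n + d) + 1) = w (n + d) := by
        by_contra hne
        rw [hcs (n + d), if_neg hne] at h2; omega
      have : n + (d + 1) = (n + d) + 1 := by omega
      rw [this, h3]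
      exact ih h1
  have hconst' : ∀ n m, c n = c m → w n = w m := by
    intro n m h
    rcases le_total m n with hle | hle
    · obtain ⟨d, rfl⟩ : ∃ d, n = m + d := ⟨n - m, by omega⟩
      exact hconst m d h
    · obtain ⟨d, rfl⟩ : ∃ d, m = n + d := ⟨m - n, by omega⟩
      exact (hconst n d h.symm).symm
  have hub : ∀ K, ∃ n, K ≤ c n := by
    intro K
    induction K with
    | zero => exact ⟨0, Nat.zero_le _⟩
    | succ K ih =>
      obtain ⟨n, hn⟩ := ih
      obtain ⟨m, hm, hmn⟩ := hinf.exists_gt n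
      refine ⟨m + 1, ?_⟩
      rw [hcs m, if_neg hm]
      have := hmono (le_of_lt hmn : n ≤ m)
      omega
  have hmin : ∀ (P : ℕ → Prop), (∃ n, P n) → ∃ n, P n ∧ ∀ j, j < n → ¬ P j := by
    intro P hP
    classical
    exact ⟨Nat.find hP, Nat.find_spec hP, fun j hj => Nat.find_min hP hj⟩
  have hsurj : ∀ k, ∃ n, c n = k := by
    intro k
    obtain ⟨n, hn, hnmin⟩ := hmin (fun n => k ≤ c n) (hub k)
    rcases Nat.eq_zero_or_pos n with h | h
    · refine ⟨0, ?_⟩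
      rw [h, hc0] at hn
      rw [hc0]
      omega
    · obtain ⟨j, hj⟩ : ∃ j, n = j + 1 := ⟨n - 1, by omega⟩
      have hji : ¬ k ≤ c j := hnmin j (by omega)
      have hle : c n ≤ c j + 1 := by rw [hj, hcs j]; split <;> omega
      exact ⟨n, by omega⟩
  obtain ⟨t, ht⟩ : ∃ t : ℕ → ℕ, ∀ k, c (t k) = k := by
    choose t ht using hsurj
    exact ⟨t, ht⟩
  set u : ℕ → α := fun k => w (t k) with hu
  have hchain : ∀ k, M (u k) (u (k + 1)) := by
    intro k
    obtain ⟨n, hn, hnmin⟩ := hmin (fun n => c n = k + 1) (hsurj (k + 1))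
    have hnpos : n ≠ 0 := by
      intro h; rw [h, hc0] at hn; omega
    obtain ⟨j, hj⟩ : ∃ j, n = j + 1 := ⟨n - 1, by omega⟩
    have hcj : ¬ c j = k + 1 := hnmin j (by omega)
    have hwne : w (j + 1) ≠ w j := by
      intro h; rw [hj, hcs j, if_pos h] at hn; exact hcj hn
    have hcj' : c j = k := by
      have h2 := hn; rw [hj, hcs j, if_neg hwne] at h2; omega
    have hM : M (w j) (w (j + 1)) := (hstep j).resolve_left hwne
    have e1 : w j = u k := hconst' j (t k) (by rw [ht, hcj'])
    have e2 : w (j + 1) = u (k + 1) := by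
      apply hconst' (j + 1) (t (k + 1))
      rw [ht (k + 1), ← hj]
      exact hn
    rw [← e1, ← e2]
    exact hM
  have hu0 : u 0 = w 0 := hconst' (t 0) 0 (by rw [ht, hc0])
  have haux : ∀ k d, u k = u (k + d + 1) → False := by
    intro k
    induction k with
    | zero =>
      intro d h
      apply h0 (u d)
      have := hchain d
      rw [show d + 1 = 0 + d + 1 by omega, ← h, hu0] at this
      exact this
    | succ k ih =>
      intro d h
      have h1 : M (u k) (u (k + 1)) := hchain k
      have h2 : M (u (k + d + 1)) (u (k + d + 2)) := hchain (k + d + 1)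
      have hh : u (k + 1) = u (k + d + 2) := by
        rw [h]; congr 1; omega
      rw [← hh] at h2
      exact ih d (hinj h1 h2)
  have huinj : Function.Injective u := by
    intro i j h
    rcases lt_trichotomy i j with hlt | heq | hlt
    · exact absurd (by rw [show j = i + (j - i - 1) + 1 by omega] at h; exact h)
        (fun hh => haux i (j - i - 1) hh)
    · exact heq
    · exact absurd (by rw [show i = j + (i - j - 1) + 1 by omega] at h; exact h.symm)
        (fun hh => haux j (i - j - 1) hh)
  have hrange : Set.range u ⊆ {a | a ∈ Set.range w ∧ ∃ b, M a b} := by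
    rintro x ⟨k, rfl⟩
    exact ⟨⟨t k, rfl⟩, u (k + 1), hchain k⟩
  exact (Set.infinite_range_of_injective huinj) (hfin.subset hrange)




/-- **Termination of the SIAM.**  There is no infinite sequence of
transitions of the machine `M_R` starting from the initial state `I_R`. -/
theorem siam_termination (R : Struct) (hWF : R.WF) (hC : R.Correct)
    (g : ℕ → SState R) (h0 : g 0 = initState R) :
    ¬ ∀ n : ℕ, STrans R (g n) (g (n + 1)) := by
  intro hs
  classical
  have hmemD : ∀ n p, (g n).f p ≠ none → p ∈ tokSet R := by
    intro n p hp
    rcases (g n).dom_subset p hp with h | h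
    · exact mem_tokSet_of (Or.inl h.2.atomOcc)
    · exact mem_tokSet_of (Or.inr h.2)
  have hsome1 : ∀ n p, (g n).f p ≠ none → (g (n + 1)).f p ≠ none := by
    intro n p hp
    rcases step_moves (hs n) p with h | ⟨v, w, _, hw, _⟩ | ⟨h, _⟩
    · rw [h]; exact hp
    · rw [hw]; exact Option.some_ne_none _
    · exact absurd h hp
  have hsome : ∀ {n m : ℕ} (p), n ≤ m → (g n).f p ≠ none → (g m).f p ≠ none := by
    intro n m p h
    induction h with
    | refl => exact id
    | step _ ih => exact fun hp => hsome1 _ _ (ih hp)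
  set D := tokSet R with hD
  set dom : ℕ → Finset (R.Edge × Formula.Addr) :=
    fun n => D.filter fun p => (g n).f p ≠ none with hdom
  have hdommem : ∀ n p, p ∈ dom n ↔ (g n).f p ≠ none := by
    intro n p
    simp only [hdom, Finset.mem_filter]
    exact ⟨fun h => h.2, fun h => ⟨hmemD n p h, h⟩⟩
  have hdsub : ∀ {n m : ℕ}, n ≤ m → dom n ⊆ dom m := by
    intro n m h p hp
    exact (hdommem m p).2 (hsome p h ((hdommem n p).1 hp))
  obtain ⟨N, hN⟩ : ∃ N, ∀ n, N ≤ n → dom n = dom N := by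
    have hbdd : BddAbove (Set.range fun n => (dom n).card) := by
      refine ⟨D.card, ?_⟩
      rintro x ⟨n, rfl⟩
      exact Finset.card_filter_le _ _
    obtain ⟨N, hNeq⟩ := Set.mem_range.1 (Nat.sSup_mem (Set.range_nonempty _) hbdd)
    refine ⟨N, fun n hn => ?_⟩
    have h1 : dom N ⊆ dom n := hdsub hn
    have h2 : (dom n).card ≤ (dom N).card := by
      rw [hNeq]; exact le_csSup hbdd ⟨n, rfl⟩
    exact (Finset.eq_of_subset_of_card_le h1 h2).symm
  have hstepN : ∀ n, N ≤ n → ∀ p, (g (n + 1)).f p = (g n).f p ∨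
      ∃ v w, (g n).f p = some v ∧ (g (n + 1)).f p = some w ∧ Move R v w := by
    intro n hn p
    rcases step_moves (hs n) p with h | h | ⟨h1, e, rfl, h3, h4⟩
    · exact Or.inl h
    · exact Or.inr h
    · exfalso
      have hmem : (e, []) ∈ dom (n + 1) :=
        (hdommem _ _).2 (by rw [h4]; exact Option.some_ne_none _)
      rw [hN (n + 1) (by omega), ← hN n hn] at hmem
      exact (hdommem _ _).1 hmem h1
  have hchange : ∀ n, N ≤ n → ∃ p ∈ D, (g n).f p ≠ (g (n + 1)).f p := by
    intro n hn
    rcases step_change hC (hs n) with ⟨q, v, w, hv, hw, hne⟩ | ⟨q, h1, h2⟩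
    · refine ⟨q, hmemD n q (by rw [hv]; exact Option.some_ne_none _), ?_⟩
      rw [hv, hw]
      intro hcon; injection hcon with hcon; exact hne hcon
    · exfalso
      have hmem : q ∈ dom (n + 1) := (hdommem _ _).2 h2
      rw [hN (n + 1) (by omega), ← hN n hn] at hmem
      exact (hdommem _ _).1 hmem h1
  obtain ⟨p, hpD, hpinf⟩ : ∃ p ∈ D,
      {n | N ≤ n ∧ (g n).f p ≠ (g (n + 1)).f p}.Infinite := by
    by_contra hfin
    push_neg at hfin
    have hfin' : (⋃ q ∈ (↑D : Set (R.Edge × Formula.Addr)),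
        {n | N ≤ n ∧ (g n).f q ≠ (g (n + 1)).f q}).Finite :=
      Set.Finite.biUnion D.finite_toSet fun q hq =>
        (hfin q (Finset.mem_coe.1 hq))
    have hsub : Set.Ici N ⊆ ⋃ q ∈ (↑D : Set (R.Edge × Formula.Addr)),
        {n | N ≤ n ∧ (g n).f q ≠ (g (n + 1)).f q} := by
      intro n hn
      obtain ⟨q, hq, hne⟩ := hchange n hn
      exact Set.mem_biUnion hq ⟨hn, hne⟩
    exact ((Set.Ici_infinite N).mono hsub) hfin'
  have hex : ∃ n, (g n).f p ≠ none := by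
    obtain ⟨n, hn, hne⟩ := hpinf.nonempty
    rcases hstepN n hn p with h | ⟨v, w, hv, -, -⟩
    · exact absurd h.symm hne
    · exact ⟨n, by rw [hv]; exact Option.some_ne_none _⟩
  set s := Nat.find hex with hsdef
  have hs0 : (g s).f p ≠ none := Nat.find_spec hex
  have hslb : ∀ n, (g n).f p ≠ none → s ≤ n := fun n hn => Nat.find_min' hex hn
  obtain ⟨v₀, hv₀, horig⟩ : ∃ v₀, (g s).f p = some v₀ ∧ ∀ u, ¬ Move R u v₀ := by
    rcases Nat.eq_zero_or_pos s with hz | hz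
    · by_cases hip : R.InitPos p
      · refine ⟨.atom p.1 p.2, ?_, init_not_target hWF hip⟩
        rw [hz, h0]
        simp only [initState, if_pos hip]
      · exfalso
        apply hs0
        rw [hz, h0]
        simp only [initState, if_neg hip]
    · obtain ⟨k, hk⟩ : ∃ k, s = k + 1 := ⟨s - 1, by omega⟩
      have hnone : (g k).f p = none := by
        by_contra hcon
        have := hslb k hcon
        omega
      rcases step_moves (hs k) p with h | ⟨v, w, hv, -, -⟩ | ⟨-, e, he, hone, hval'⟩
      · exfalso; apply hs0; rw [hk, h]; exact hnone
      · rw [hnone] at hv; cases hv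
      · refine ⟨.atom e [], ?_, spawn_not_target hWF hone⟩
        rw [hk]; exact hval'
  have hsomeall : ∀ n, (g (s + n)).f p ≠ none :=
    fun n => hsome p (Nat.le_add_right s n) hs0
  set W : ℕ → Struct.PosVal R :=
    fun n => ((g (s + n)).f p).get (Option.isSome_iff_ne_none.2 (hsomeall n)) with hWdef
  have hWs : ∀ n, (g (s + n)).f p = some (W n) := fun n => (Option.some_get _).symm
  have hW0 : W 0 = v₀ := by
    have h1 := hWs 0
    rw [Nat.add_zero, hv₀] at h1
    injection h1 with h1
    exact h1.symm
  have hWstep : ∀ n, W (n + 1) = W n ∨ Move R (W n) (W (n + 1)) := by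
    intro n
    have hadd : s + (n + 1) = (s + n) + 1 := rfl
    rcases step_moves (hs (s + n)) p with h | ⟨v, w, hv, hw, hm⟩ | ⟨h1, -⟩
    · left
      have h2 := hWs (n + 1)
      rw [hadd, h, hWs n] at h2
      injection h2 with h2
      exact h2.symm
    · right
      have hv' := hWs n
      rw [hv] at hv'
      injection hv' with hv'
      have hw' := hWs (n + 1)
      rw [hadd, hw] at hw'
      injection hw' with hw'
      rw [← hv', ← hw']
      exact hm
    · rw [hWs n] at h1; cases h1
  have hWinf : {n | W (n + 1) ≠ W n}.Infinite := by
    have hlbs : ∀ a, a ∈ {n | N ≤ n ∧ (g n).f p ≠ (g (n + 1)).f p} → s ≤ a := by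
      intro a ha
      rcases hstepN a ha.1 p with h | ⟨v, w, hv, -, -⟩
      · exact absurd h.symm ha.2
      · exact hslb a (by rw [hv]; exact Option.some_ne_none _)
    have hinjon : Set.InjOn (fun n => n - s)
        {n | N ≤ n ∧ (g n).f p ≠ (g (n + 1)).f p} := by
      intro a ha b hb hab
      have h1 := hlbs a ha
      have h2 := hlbs b hb
      simp only at hab
      omega
    have himg := hpinf.image hinjon
    refine himg.mono ?_
    rintro k ⟨n, hn, rfl⟩
    have hsn : s ≤ n := hlbs n hn
    have h1 : s + (n - s) = n := by omega
    have h2 : s + (n - s + 1) = n + 1 := by omega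
    intro heq
    apply hn.2
    have e1 := hWs (n - s)
    rw [h1] at e1
    have e2 := hWs (n - s + 1)
    rw [h2] at e2
    rw [e1, e2, heq]
  have hfinset : {a | a ∈ Set.range W ∧ ∃ b, Move R a b}.Finite := by
    apply Set.Finite.subset
      ((D.image fun q => (Struct.PosVal.atom q.1 q.2 : Struct.PosVal R)).finite_toSet)
    rintro v ⟨⟨n, rfl⟩, b, hb⟩
    obtain ⟨e, m, hem⟩ := move_src_atom hb
    have hvv : R.ValidVal (W n) := (g (s + n)).val_valid p (W n) (hWs n)
    rw [hem] at hvv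
    have hvv' : Formula.AtomOcc (R.typ e) m := hvv
    rw [hem]
    simp only [Finset.coe_image, Set.mem_image, Finset.mem_coe]
    exact ⟨(e, m), mem_tokSet_of (Or.inl hvv'), rfl⟩
  exact orbit_false (Move R) (fun h1 h2 => move_inj hWF h1 h2) W
    (by rw [hW0]; exact horig) hWstep hWinf hfinset
end

section
/- (Progress) In the linear quantum λ-calculus, if [Q, t] : A is a quantum closure in normal form — i.e. there is no distribution 𝒟 with [Q, t] ↦ 𝒟 — then t is a value. -/
/-! # A linear quantum λ-calculus (Selinger–Valiron style)

Terms, linear typing, quantum closures and their probabilistic operational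
semantics, following Dal Lago, Faggian, Hasuo, Yoshimizu,
"The Geometry of Synchronization". -/

/-- Types: `A, B ::= 𝔹 | ℚ | A ⊸ B | A ⊗ B`. -/
inductive Ty : Type
  | bool : Ty
  | qbit : Ty
  | lolli : Ty → Ty → Ty
  | tensor : Ty → Ty → Ty
  deriving DecidableEq

/-- `Ty.qpow n` is `ℚ^{⊗(n+1)}`. -/
def Ty.qpow : ℕ → Ty
  | 0 => .qbit
  | n + 1 => .tensor .qbit (Ty.qpow n)

/-- Terms of the linear quantum λ-calculus.  λ-variables are de Bruijn
indices; quantum variables are names (natural numbers); `UO` is the (finite)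
set of unitary-operator symbols.  `lam` binds one variable, `lett` (the
`let ⟨x,y⟩ = t in u` construct) binds two variables in its second argument. -/
inductive QTm (UO : Type) : Type
  | var : ℕ → QTm UO
  | qvar : ℕ → QTm UO
  | app : QTm UO → QTm UO → QTm UO
  | lam : QTm UO → QTm UO
  | pair : QTm UO → QTm UO → QTm UO
  | lett : QTm UO → QTm UO → QTm UO
  | new : QTm UO
  | tt : QTm UO
  | ff : QTm UO
  | meas : QTm UO
  | unit : UO → QTm UO
  | ite : QTm UO → QTm UO → QTm UO → QTm UO

namespace QTm

variable {UO : Type}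

/-- Shifting of the de Bruijn indices `≥ d` by one. -/
def lift (d : ℕ) : QTm UO → QTm UO
  | .var k => if k < d then .var k else .var (k + 1)
  | .qvar r => .qvar r
  | .app t u => .app (t.lift d) (u.lift d)
  | .lam t => .lam (t.lift (d + 1))
  | .pair t u => .pair (t.lift d) (u.lift d)
  | .lett t u => .lett (t.lift d) (u.lift (d + 2))
  | .new => .new
  | .tt => .tt
  | .ff => .ff
  | .meas => .meas
  | .unit g => .unit g
  | .ite t u v => .ite (t.lift d) (u.lift d) (v.lift d)

/-- Capture-avoiding substitution of `u` for the de Bruijn variable `j`. -/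
def substAt : ℕ → QTm UO → QTm UO → QTm UO
  | j, u, .var k => if k < j then .var k else if k = j then u else .var (k - 1)
  | _, _, .qvar r => .qvar r
  | j, u, .app t s => .app (substAt j u t) (substAt j u s)
  | j, u, .lam t => .lam (substAt (j + 1) (u.lift 0) t)
  | j, u, .pair t s => .pair (substAt j u t) (substAt j u s)
  | j, u, .lett t s => .lett (substAt j u t) (substAt (j + 2) ((u.lift 0).lift 0) s)
  | _, _, .new => .new
  | _, _, .tt => .tt
  | _, _, .ff => .ff
  | _, _, .meas => .meas
  | _, _, .unit g => .unit g
  | j, u, .ite t s v => .ite (substAt j u t) (substAt j u s) (substAt j u v)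

end QTm

/-- The `n+1`-tuple `⟨r₀, …, r_n⟩` of quantum variables (as nested pairs). -/
def qtuple {UO : Type} : (n : ℕ) → (Fin (n + 1) → ℕ) → QTm UO
  | 0, r => .qvar (r 0)
  | n + 1, r => .pair (.qvar (r 0)) (qtuple n fun i => r i.succ)

/-! ## Linear typing -/

/-- Typing environments for λ-variables: the de Bruijn variable `i` has type
`A` in `Γ` when the `i`-th entry of `Γ` is `some A` (absent entries and
entries `none` mean that the variable is not available). -/
abbrev Ctx := List (Option Ty)

/-- The entry of a context at position `j`. -/
def centry (Γ : Ctx) (j : ℕ) : Option Ty := (Γ[j]?).join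

/-- The empty (null) context: no variable is available. -/
def CtxNull (Γ : Ctx) : Prop := ∀ j, centry Γ j = none

/-- The context makes available exactly the variable `i`, with type `A`. -/
def CtxUses (Γ : Ctx) (i : ℕ) (A : Ty) : Prop :=
  centry Γ i = some A ∧ ∀ j, j ≠ i → centry Γ j = none

/-- Splitting of a context into two disjoint parts. -/
def CtxSplit (Γ Γ₁ Γ₂ : Ctx) : Prop :=
  ∀ j, (centry Γ₁ j = none ∧ centry Γ j = centry Γ₂ j) ∨
       (centry Γ₂ j = none ∧ centry Γ j = centry Γ₁ j)

/-- Typing judgments `Θ, V ⊢ t : A` of the linear quantum λ-calculus, where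
`Θ` is an environment for λ-variables and `V` a finite set of quantum
variables.  The parameter `ar` assigns to each unitary symbol its arity minus
one (so every unitary has arity at least 1). -/
inductive QTyped {UO : Type} (ar : UO → ℕ) : Ctx → Finset ℕ → QTm UO → Ty → Prop
  | var {Γ : Ctx} {i : ℕ} {A : Ty} :
      CtxUses Γ i A → QTyped ar Γ ∅ (.var i) A
  | qvar {Γ : Ctx} {r : ℕ} :
      CtxNull Γ → QTyped ar Γ {r} (.qvar r) .qbit
  | lam {Γ : Ctx} {V : Finset ℕ} {t : QTm UO} {A B : Ty} :
      QTyped ar (some A :: Γ) V t B → QTyped ar Γ V (.lam t) (.lolli A B)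
  | app {Γ Γ₁ Γ₂ : Ctx} {V₁ V₂ : Finset ℕ} {t u : QTm UO} {A B : Ty} :
      CtxSplit Γ Γ₁ Γ₂ → Disjoint V₁ V₂ →
      QTyped ar Γ₁ V₁ t (.lolli A B) → QTyped ar Γ₂ V₂ u A →
      QTyped ar Γ (V₁ ∪ V₂) (.app t u) B
  | pair {Γ Γ₁ Γ₂ : Ctx} {V₁ V₂ : Finset ℕ} {t u : QTm UO} {A B : Ty} :
      CtxSplit Γ Γ₁ Γ₂ → Disjoint V₁ V₂ →
      QTyped ar Γ₁ V₁ t A → QTyped ar Γ₂ V₂ u B →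
      QTyped ar Γ (V₁ ∪ V₂) (.pair t u) (.tensor A B)
  | lett {Γ Γ₁ Γ₂ : Ctx} {V₁ V₂ : Finset ℕ} {t u : QTm UO} {A B C : Ty} :
      CtxSplit Γ Γ₁ Γ₂ → Disjoint V₁ V₂ →
      QTyped ar Γ₁ V₁ t (.tensor A B) →
      QTyped ar (some A :: some B :: Γ₂) V₂ u C →
      QTyped ar Γ (V₁ ∪ V₂) (.lett t u) C
  | tt {Γ : Ctx} : CtxNull Γ → QTyped ar Γ ∅ .tt .bool
  | ff {Γ : Ctx} : CtxNull Γ → QTyped ar Γ ∅ .ff .bool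
  | ite {Γ : Ctx} {V : Finset ℕ} {t u v : QTm UO} {A : Ty} :
      QTyped ar Γ V t .bool → QTyped ar [] ∅ u A → QTyped ar [] ∅ v A →
      QTyped ar Γ V (.ite t u v) A
  | new {Γ : Ctx} : CtxNull Γ → QTyped ar Γ ∅ .new .qbit
  | meas {Γ : Ctx} : CtxNull Γ → QTyped ar Γ ∅ .meas (.lolli .qbit .bool)
  | unit {Γ : Ctx} {g : UO} :
      CtxNull Γ →
      QTyped ar Γ ∅ (.unit g) (.lolli (Ty.qpow (ar g)) (Ty.qpow (ar g)))

/-! ## Values and evaluation contexts -/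

/-- Values: `a, b ::= r | λx.t | ⟨a,b⟩ | new | tt | ff | meas | U`. -/
inductive IsValue {UO : Type} : QTm UO → Prop
  | qvar (r : ℕ) : IsValue (.qvar r)
  | lam (t : QTm UO) : IsValue (.lam t)
  | pair {a b : QTm UO} : IsValue a → IsValue b → IsValue (.pair a b)
  | new : IsValue .new
  | tt : IsValue .tt
  | ff : IsValue .ff
  | meas : IsValue .meas
  | unit (g : UO) : IsValue (.unit g)

/-- Evaluation contexts:
`E ::= [·] | E t | a F | ⟨E,t⟩ | ⟨a,F⟩ | let ⟨x,y⟩ = E in t | if E then t else u`. -/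
inductive ECtx (UO : Type) : Type
  | hole : ECtx UO
  | appL : ECtx UO → QTm UO → ECtx UO
  | appR : QTm UO → ECtx UO → ECtx UO
  | pairL : ECtx UO → QTm UO → ECtx UO
  | pairR : QTm UO → ECtx UO → ECtx UO
  | lett : ECtx UO → QTm UO → ECtx UO
  | ite : ECtx UO → QTm UO → QTm UO → ECtx UO

namespace ECtx

variable {UO : Type}

/-- Plugging a term in the hole of an evaluation context. -/
def plug : ECtx UO → QTm UO → QTm UO
  | .hole, s => s
  | .appL E t, s => .app (E.plug s) t
  | .appR a E, s => .app a (E.plug s)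
  | .pairL E t, s => .pair (E.plug s) t
  | .pairR a E, s => .pair a (E.plug s)
  | .lett E u, s => .lett (E.plug s) u
  | .ite E t u, s => .ite (E.plug s) t u

/-- Well-formedness of an evaluation context: the left components of `a F`
and `⟨a, F⟩` must be values. -/
def Ok : ECtx UO → Prop
  | .hole => True
  | .appL E _ => Ok E
  | .appR a E => IsValue a ∧ Ok E
  | .pairL E _ => Ok E
  | .pairR a E => IsValue a ∧ Ok E
  | .lett E _ => Ok E
  | .ite E _ _ => Ok E

end ECtx

/-! ## Quantum registers and closures -/

/-- The Hilbert space generated by the valuations of the quantum variables in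
`V`: amplitudes indexed by functions `V → {0,1}`. -/
def HS (V : Finset ℕ) : Type := ({x // x ∈ V} → Bool) → ℂ

/-- The squared norm of a vector of `HS V`. -/
noncomputable def nsq {V : Finset ℕ} (Q : HS V) : ℝ :=
  ∑ f : {x // x ∈ V} → Bool, ‖Q f‖ ^ 2

/-- A canonical fresh quantum variable. -/
def freshQ (V : Finset ℕ) : ℕ := (V.sup id) + 1

/-- `Q ⊗ |r ← 0⟩`. -/
noncomputable def extendQ {V : Finset ℕ} (r : ℕ) (Q : HS V) : HS (insert r V) :=
  fun f =>
    if f ⟨r, Finset.mem_insert_self r V⟩ = false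
    then Q fun v => f ⟨v.1, Finset.mem_insert_of_mem v.2⟩
    else 0

/-- Application of a `2^{n} × 2^{n}` matrix `M` to the qubits `r` of a
register `Q` (the qubits `r` are assumed pairwise distinct). -/
noncomputable def applyU {V : Finset ℕ} {ρ : Type} [Fintype ρ] [DecidableEq ρ]
    (M : Matrix (ρ → Bool) (ρ → Bool) ℂ) (r : ρ → {x // x ∈ V}) (Q : HS V) :
    HS V :=
  fun b => ∑ c : ρ → Bool,
    M (fun i => b (r i)) c *
      Q (fun v => if h : ∃ i, r i = v then c h.choose else b v)

/-- The probability of observing `b` when measuring the variable `v` in `Q`. -/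
noncomputable def probQ {V : Finset ℕ} (v : {x // x ∈ V}) (b : Bool) (Q : HS V) : ℝ :=
  ∑ f : {x // x ∈ V} → Bool, if f v = b then ‖Q f‖ ^ 2 else 0

/-- The renormalized projection of `Q` onto the subspace where `v` is
assigned `b`. -/
noncomputable def projRQ {V : Finset ℕ} (v : {x // x ∈ V}) (b : Bool) (Q : HS V) :
    HS V :=
  fun f => if f v = b then (((Real.sqrt (probQ v b Q))⁻¹ : ℝ) : ℂ) * Q f else 0

/-- A quantum closure `[Q, t]`. -/
structure QClos (UO : Type) : Type where
  V : Finset ℕ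
  Q : HS V
  t : QTm UO

/-- `[Q, t] : A` — the quantum closure is well-typed: `Q` is normalized and
`V ⊢ t : A`. -/
def QClos.Typed {UO : Type} (ar : UO → ℕ) (C : QClos UO) (A : Ty) : Prop :=
  nsq C.Q = 1 ∧ QTyped ar [] C.V C.t A

/-! ## Distributions and the operational semantics -/

open Classical in
/-- The Dirac (point) distribution. -/
noncomputable def dirac {X : Type*} (x : X) : X → ℝ := fun y => if y = x then 1 else 0

open Classical in
/-- The distribution `{x₁^{p₁}, x₂^{p₂}}`. -/
noncomputable def twoDist {X : Type*} (x₁ x₂ : X) (p₁ p₂ : ℝ) : X → ℝ :=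
  fun y => (if y = x₁ then p₁ else 0) + (if y = x₂ then p₂ else 0)

/-- The one-step reduction relation `↦` between quantum closures and finite
distributions of quantum closures. -/
inductive SStep {UO : Type} (ar : UO → ℕ)
    (interp : ∀ g : UO, Matrix (Fin (ar g + 1) → Bool) (Fin (ar g + 1) → Bool) ℂ) :
    QClos UO → (QClos UO → ℝ) → Prop
  | beta {V : Finset ℕ} {Q : HS V} {E : ECtx UO} {t u : QTm UO} :
      E.Ok →
      SStep ar interp ⟨V, Q, E.plug (.app (.lam t) u)⟩
        (dirac ⟨V, Q, E.plug (QTm.substAt 0 u t)⟩)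
  | lett {V : Finset ℕ} {Q : HS V} {E : ECtx UO} {t u v : QTm UO} :
      E.Ok →
      SStep ar interp ⟨V, Q, E.plug (.lett (.pair t u) v)⟩
        (dirac ⟨V, Q, E.plug (QTm.substAt 0 t (QTm.substAt 1 (u.lift 0) v))⟩)
  | iteTT {V : Finset ℕ} {Q : HS V} {E : ECtx UO} {t u : QTm UO} :
      E.Ok →
      SStep ar interp ⟨V, Q, E.plug (.ite .tt t u)⟩ (dirac ⟨V, Q, E.plug t⟩)
  | iteFF {V : Finset ℕ} {Q : HS V} {E : ECtx UO} {t u : QTm UO} :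
      E.Ok →
      SStep ar interp ⟨V, Q, E.plug (.ite .ff t u)⟩ (dirac ⟨V, Q, E.plug u⟩)
  | new {V : Finset ℕ} {Q : HS V} {E : ECtx UO} :
      E.Ok →
      SStep ar interp ⟨V, Q, E.plug .new⟩
        (dirac ⟨insert (freshQ V) V, extendQ (freshQ V) Q,
                E.plug (.qvar (freshQ V))⟩)
  | unitary {V : Finset ℕ} {Q : HS V} {E : ECtx UO} {g : UO}
      {r : Fin (ar g + 1) → {x // x ∈ V}} :
      E.Ok → Function.Injective r →
      SStep ar interp
        ⟨V, Q, E.plug (.app (.unit g) (qtuple (ar g) fun i => (r i).1))⟩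
        (dirac ⟨V, applyU (interp g) r Q,
                E.plug (qtuple (ar g) fun i => (r i).1)⟩)
  | meas {V : Finset ℕ} {Q : HS V} {E : ECtx UO} {r : ℕ} (hr : r ∈ V) :
      E.Ok →
      SStep ar interp ⟨V, Q, E.plug (.app .meas (.qvar r))⟩
        (twoDist ⟨V, projRQ ⟨r, hr⟩ false Q, E.plug .tt⟩
                 ⟨V, projRQ ⟨r, hr⟩ true Q, E.plug .ff⟩
                 (probQ ⟨r, hr⟩ false Q) (probQ ⟨r, hr⟩ true Q))

/-- The multistep relation `⇒` generated by a one-step relation between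
elements and finite distributions: either the Dirac distribution, or one step
to `{y₁^{q₁}, …, y_k^{q_k}}` followed by multisteps `yᵢ ⇒ 𝒮ᵢ`, giving
`Σᵢ qᵢ·𝒮ᵢ`. -/
inductive MStep {X : Type*} (rel : X → (X → ℝ) → Prop) : X → (X → ℝ) → Prop
  | refl (x : X) : MStep rel x (dirac x)
  | step {x : X} {𝒟 : X → ℝ} {k : ℕ} {y : Fin k → X} {q : Fin k → ℝ}
      {𝒮 : Fin k → X → ℝ} :
      rel x 𝒟 → Function.Injective y →
      (∀ i, 𝒟 (y i) = q i) → (∀ z, (∀ i, z ≠ y i) → 𝒟 z = 0) →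
      (∀ i, MStep rel (y i) (𝒮 i)) →
      MStep rel x (fun z => ∑ i, q i * 𝒮 i z)


/-! ## Auxiliary lemmas for progress -/

section ProgressAux

variable {UO : Type}

/-- Composition of evaluation contexts. -/
def ECtx.comp : ECtx UO → ECtx UO → ECtx UO
  | .hole, F => F
  | .appL E t, F => .appL (E.comp F) t
  | .appR a E, F => .appR a (E.comp F)
  | .pairL E t, F => .pairL (E.comp F) t
  | .pairR a E, F => .pairR a (E.comp F)
  | .lett E u, F => .lett (E.comp F) u
  | .ite E t u, F => .ite (E.comp F) t u

@[simp] lemma ECtx.comp_plug (E F : ECtx UO) (s : QTm UO) :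
    (E.comp F).plug s = E.plug (F.plug s) := by
  induction E <;> simp [ECtx.comp, ECtx.plug, *]

lemma ECtx.comp_ok {E F : ECtx UO} (hE : E.Ok) (hF : F.Ok) : (E.comp F).Ok := by
  induction E <;> simp_all [ECtx.comp, ECtx.Ok]

lemma ctxNull_of_split_left {Γ Γ₁ Γ₂ : Ctx} (hn : CtxNull Γ) (hs : CtxSplit Γ Γ₁ Γ₂) :
    CtxNull Γ₁ := by
  intro j
  rcases hs j with ⟨h1, _⟩ | ⟨_, h2⟩
  · exact h1
  · rw [← h2]; exact hn j

lemma ctxNull_of_split_right {Γ Γ₁ Γ₂ : Ctx} (hn : CtxNull Γ) (hs : CtxSplit Γ Γ₁ Γ₂) :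
    CtxNull Γ₂ := by
  intro j
  rcases hs j with ⟨_, h2⟩ | ⟨h1, _⟩
  · rw [← h2]; exact hn j
  · exact h1

/-- Canonical forms for values of type `ℚ^{⊗(n+1)}`: either the value has a
`new` in evaluation position, or it is a tuple of pairwise distinct quantum
variables of `V`. -/
lemma qpow_value (ar : UO → ℕ) :
    ∀ (n : ℕ) {Γ : Ctx} {V : Finset ℕ} {u : QTm UO},
    QTyped ar Γ V u (Ty.qpow n) → IsValue u →
    (∃ F : ECtx UO, F.Ok ∧ u = F.plug .new) ∨
    (∃ r : Fin (n + 1) → ℕ, Function.Injective r ∧ (∀ i, r i ∈ V) ∧ u = qtuple n r)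
  | 0, Γ, V, u => by
    intro h hv
    cases hv with
    | qvar r =>
      cases h with
      | qvar _ =>
        exact Or.inr ⟨fun _ => r, fun i j _ => by omega,
          fun _ => Finset.mem_singleton_self r, rfl⟩
    | new => exact Or.inl ⟨.hole, trivial, rfl⟩
    | lam t => cases h
    | pair _ _ => cases h
    | tt => cases h
    | ff => cases h
    | meas => cases h
    | unit g => cases h
  | n + 1, Γ, V, u => by
    intro h hv
    cases hv with
    | pair ha hb =>
      cases h with
      | pair hsplit hdisj hta htb =>
        cases ha with
        | qvar r₁ =>
          cases hta with
          | qvar _ =>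
            rcases qpow_value ar n htb hb with ⟨F, hF, rfl⟩ | ⟨rb, hinj, hmem, rfl⟩
            · exact Or.inl ⟨.pairR (.qvar r₁) F, ⟨IsValue.qvar r₁, hF⟩, rfl⟩
            · have hr₁ := Finset.disjoint_left.mp hdisj (Finset.mem_singleton_self r₁)
              refine Or.inr ⟨Fin.cons r₁ rb, ?_, ?_, ?_⟩
              · intro i j
                induction i using Fin.cases with
                | zero =>
                  induction j using Fin.cases with
                  | zero => intro _; rfl
                  | succ j =>
                    intro hij
                    simp only [Fin.cons_zero, Fin.cons_succ] at hij
                    exact (hr₁ (by rw [hij]; exact hmem j)).elim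
                | succ i =>
                  induction j using Fin.cases with
                  | zero =>
                    intro hij
                    simp only [Fin.cons_zero, Fin.cons_succ] at hij
                    exact (hr₁ (by rw [← hij]; exact hmem i)).elim
                  | succ j =>
                    intro hij
                    simp only [Fin.cons_succ] at hij
                    exact congrArg Fin.succ (hinj hij)
              · intro i
                induction i using Fin.cases with
                | zero =>
                  simp only [Fin.cons_zero]
                  exact Finset.mem_union_left _ (Finset.mem_singleton_self r₁)
                | succ i =>
                  simp only [Fin.cons_succ]
                  exact Finset.mem_union_right _ (hmem i)
              · simp [qtuple, Fin.cons_zero, Fin.cons_succ]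
        | lam t => cases hta
        | pair _ _ => cases hta
        | new => exact Or.inl ⟨.pairL .hole _, trivial, rfl⟩
        | tt => cases hta
        | ff => cases hta
        | meas => cases hta
        | unit g => cases hta
    | qvar r => cases h
    | lam t => cases h
    | new => cases h
    | tt => cases h
    | ff => cases h
    | meas => cases h
    | unit g => cases h

/-- The main induction: a well-typed term in a null λ-context, whose quantum
variables lie in `W`, is a value or can step inside any well-formed
evaluation context. -/
lemma progress_aux (ar : UO → ℕ)
    (interp : ∀ g : UO, Matrix (Fin (ar g + 1) → Bool) (Fin (ar g + 1) → Bool) ℂ)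
    {Γ : Ctx} {V : Finset ℕ} {t : QTm UO} {A : Ty} (h : QTyped ar Γ V t A) :
    CtxNull Γ → ∀ (W : Finset ℕ), V ⊆ W → ∀ (Q : HS W) (E : ECtx UO), E.Ok →
    IsValue t ∨ ∃ 𝒟, SStep ar interp ⟨W, Q, E.plug t⟩ 𝒟 := by
  induction h with
  | var hu =>
    intro hn W _ Q E _
    obtain ⟨h1, -⟩ := hu
    rw [hn] at h1
    exact absurd h1 (by simp)
  | qvar _ => intros; exact Or.inl (IsValue.qvar _)
  | lam _ _ => intros; exact Or.inl (IsValue.lam _)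
  | tt _ => intros; exact Or.inl IsValue.tt
  | ff _ => intros; exact Or.inl IsValue.ff
  | new _ => intros; exact Or.inl IsValue.new
  | meas _ => intros; exact Or.inl IsValue.meas
  | unit _ => intros; exact Or.inl (IsValue.unit _)
  | @app Γ Γ₁ Γ₂ V₁ V₂ t u A B hsplit hdisj ht hu iht ihu =>
    intro hn W hVW Q E hE
    right
    have hn₁ := ctxNull_of_split_left hn hsplit
    have hn₂ := ctxNull_of_split_right hn hsplit
    have hV₁ : V₁ ⊆ W := (Finset.union_subset_iff.mp hVW).1
    have hV₂ : V₂ ⊆ W := (Finset.union_subset_iff.mp hVW).2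
    rcases iht hn₁ W hV₁ Q (E.comp (.appL .hole u)) (ECtx.comp_ok hE trivial)
      with hvt | ⟨𝒟, hs⟩
    · rcases ihu hn₂ W hV₂ Q (E.comp (.appR t .hole)) (ECtx.comp_ok hE ⟨hvt, trivial⟩)
        with hvu | ⟨𝒟, hs⟩
      · cases hvt with
        | lam s => exact ⟨_, SStep.beta hE⟩
        | qvar r => cases ht
        | pair _ _ => cases ht
        | new => cases ht
        | tt => cases ht
        | ff => cases ht
        | meas =>
          cases ht with
          | meas _ =>
            cases hvu with
            | qvar r =>
              cases hu with
              | qvar _ =>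
                exact ⟨_, SStep.meas (hV₂ (Finset.mem_singleton_self r)) hE⟩
            | new =>
              have hstep := SStep.new (ar := ar) (interp := interp) (V := W) (Q := Q)
                (E := E.comp (.appR .meas .hole)) (ECtx.comp_ok hE ⟨IsValue.meas, trivial⟩)
              simp only [ECtx.comp_plug, ECtx.plug] at hstep
              exact ⟨_, hstep⟩
            | lam s => cases hu
            | pair _ _ => cases hu
            | tt => cases hu
            | ff => cases hu
            | meas => cases hu
            | unit g => cases hu
        | unit g =>
          cases ht with
          | unit _ =>
            rcases qpow_value ar (ar g) hu hvu with ⟨F, hF, rfl⟩ | ⟨r, hinj, hmem, rfl⟩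
            · have hstep := SStep.new (ar := ar) (interp := interp) (V := W) (Q := Q)
                (E := E.comp (.appR (.unit g) F))
                (ECtx.comp_ok hE ⟨IsValue.unit g, hF⟩)
              simp only [ECtx.comp_plug, ECtx.plug] at hstep
              exact ⟨_, hstep⟩
            · exact ⟨_, SStep.unitary (r := fun i => ⟨r i, hV₂ (hmem i)⟩) hE
                (fun i j hij => hinj (congrArg Subtype.val hij))⟩
      · exact ⟨𝒟, by simpa [ECtx.plug] using hs⟩
    · exact ⟨𝒟, by simpa [ECtx.plug] using hs⟩
  | @pair Γ Γ₁ Γ₂ V₁ V₂ t u A B hsplit hdisj ht hu iht ihu =>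
    intro hn W hVW Q E hE
    have hn₁ := ctxNull_of_split_left hn hsplit
    have hn₂ := ctxNull_of_split_right hn hsplit
    have hV₁ : V₁ ⊆ W := (Finset.union_subset_iff.mp hVW).1
    have hV₂ : V₂ ⊆ W := (Finset.union_subset_iff.mp hVW).2
    rcases iht hn₁ W hV₁ Q (E.comp (.pairL .hole u)) (ECtx.comp_ok hE trivial)
      with hvt | ⟨𝒟, hs⟩
    · rcases ihu hn₂ W hV₂ Q (E.comp (.pairR t .hole)) (ECtx.comp_ok hE ⟨hvt, trivial⟩)
        with hvu | ⟨𝒟, hs⟩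
      · exact Or.inl (IsValue.pair hvt hvu)
      · exact Or.inr ⟨𝒟, by simpa [ECtx.plug] using hs⟩
    · exact Or.inr ⟨𝒟, by simpa [ECtx.plug] using hs⟩
  | @lett Γ Γ₁ Γ₂ V₁ V₂ t u A B C hsplit hdisj ht hu iht ihu =>
    intro hn W hVW Q E hE
    right
    have hn₁ := ctxNull_of_split_left hn hsplit
    have hV₁ : V₁ ⊆ W := (Finset.union_subset_iff.mp hVW).1
    rcases iht hn₁ W hV₁ Q (E.comp (.lett .hole u)) (ECtx.comp_ok hE trivial)
      with hvt | ⟨𝒟, hs⟩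
    · cases hvt with
      | pair ha hb => exact ⟨_, SStep.lett hE⟩
      | qvar r => cases ht
      | lam s => cases ht
      | new => cases ht
      | tt => cases ht
      | ff => cases ht
      | meas => cases ht
      | unit g => cases ht
    · exact ⟨𝒟, by simpa [ECtx.plug] using hs⟩
  | @ite Γ V t u v A ht htu htv iht ihu ihv =>
    intro hn W hVW Q E hE
    right
    rcases iht hn W hVW Q (E.comp (.ite .hole u v)) (ECtx.comp_ok hE trivial)
      with hvt | ⟨𝒟, hs⟩
    · cases hvt with
      | tt => exact ⟨_, SStep.iteTT hE⟩
      | ff => exact ⟨_, SStep.iteFF hE⟩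
      | qvar r => cases ht
      | lam s => cases ht
      | pair _ _ => cases ht
      | new => cases ht
      | meas => cases ht
      | unit g => cases ht
    · exact ⟨𝒟, by simpa [ECtx.plug] using hs⟩

end ProgressAux

/-- **Progress.**  If `[Q, t] : A` is a quantum closure in normal form (it
relates to no distribution under `↦`), then `t` is a value. -/
theorem quantum_progress {UO : Type} [Fintype UO] (ar : UO → ℕ)
    (interp : ∀ g : UO,
      Matrix (Fin (ar g + 1) → Bool) (Fin (ar g + 1) → Bool) ℂ)
    {C : QClos UO} {A : Ty} (hC : C.Typed ar A)
    (hnf : ∀ 𝒟 : QClos UO → ℝ, ¬ SStep ar interp C 𝒟) :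
    IsValue C.t := by
  obtain ⟨V, Q, t⟩ := C
  obtain ⟨-, ht⟩ := hC
  rcases progress_aux ar interp ht (fun j => by simp [centry]) V
      (Finset.Subset.refl V) Q .hole trivial with hv | ⟨𝒟, hs⟩
  · exact hv
  · exact absurd hs (hnf 𝒟)
end

section
/- If ↪ is a relation between elements of a set and finite probability distributions over that set, and ↝ is the multistep relation generated inductively by the rules 'x ↝ {x¹}' and 'if x ↪ {y₁^{q₁},…,y_m^{q_m}} and yᵢ ↝ 𝒮ᵢ for each i, then x ↝ Σᵢ qᵢ·𝒮ᵢ', then the following holds: if R ↝ {S₁^{p₁},…,S_n^{p_n}} and Sᵢ ↝ ℛᵢ for each i ∈ {1,…,n}, then R ↝ Σᵢ₌₁ⁿ pᵢ·ℛᵢ. -/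
/-! # Multistep reduction of finite probability distributions

The abstract "multiplication" lemma for multistep reduction relations over
finite probability distributions, from Dal Lago, Faggian, Hasuo, Yoshimizu,
"The Geometry of Synchronization". -/

/-- A finite (sub)probability distribution over `X`: nonnegative, finitely
supported, of total mass at most `1`. -/
def IsSubDist {X : Type*} (𝒟 : X → ℝ) : Prop :=
  (∀ x, 0 ≤ 𝒟 x) ∧ (Function.support 𝒟).Finite ∧ ∑ᶠ x, 𝒟 x ≤ 1

open Classical in
lemma MStep_nonneg {X : Type*} {rel : X → (X → ℝ) → Prop}
    (hrel : ∀ x 𝒟, rel x 𝒟 → IsSubDist 𝒟) {x : X} {𝒟 : X → ℝ}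
    (h : MStep rel x 𝒟) : ∀ z, 0 ≤ 𝒟 z := by
  induction h with
  | refl x => intro z; unfold dirac; split <;> norm_num
  | step h1 hyinj hq hsupp hms ih =>
    intro z
    apply Finset.sum_nonneg
    intro i _
    exact mul_nonneg (by rw [← hq i]; exact (hrel _ _ h1).1 _) (ih i z)

open Classical in
lemma MStep_key {X : Type*} {rel : X → (X → ℝ) → Prop}
    (hrel : ∀ x 𝒟, rel x 𝒟 → IsSubDist 𝒟) {x : X} {𝒟 : X → ℝ}
    (h : MStep rel x 𝒟) :
    ∀ {n : ℕ} {Sf : Fin n → X} {p : Fin n → ℝ} {ℛ : Fin n → X → ℝ},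
      Function.Injective Sf →
      𝒟 = (fun z => ∑ i, if z = Sf i then p i else 0) →
      (∀ i, MStep rel (Sf i) (ℛ i)) →
      MStep rel x (fun z => ∑ i, p i * ℛ i z) := by
  induction h with
  | refl x =>
    intro n Sf p ℛ hinj heq hcont
    -- there is some i₀ with Sf i₀ = x
    have hx := congrFun heq x
    simp only [dirac, if_pos rfl] at hx
    have hex : ∃ i₀, Sf i₀ = x := by
      by_contra hne
      push_neg at hne
      rw [Finset.sum_eq_zero (fun i _ => by
        rw [if_neg (fun hh => hne i hh.symm)])] at hx
      norm_num at hx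
    obtain ⟨i₀, hi₀⟩ := hex
    have hp : ∀ j, p j = if Sf j = x then 1 else 0 := by
      intro j
      have := congrFun heq (Sf j)
      simp only [dirac] at this
      rw [Finset.sum_eq_single j (fun i _ hi => by
        rw [if_neg (fun hh => hi (hinj hh).symm)]) (by simp), if_pos rfl] at this
      exact this.symm
    have : (fun z => ∑ i, p i * ℛ i z) = ℛ i₀ := by
      funext z
      rw [Finset.sum_eq_single i₀ (fun j _ hj => by
        rw [hp j, if_neg (fun hh => hj (hinj (hh.trans hi₀.symm))), zero_mul])
        (by simp), hp i₀, if_pos hi₀, one_mul]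
    rw [this, ← hi₀]
    exact hcont i₀
  | step h1 hyinj hq hsupp hms ih =>
    rename_i x 𝒟₀ k y q 𝒮
    intro n Sf p ℛ hinj heq hcont
    have hqnn : ∀ i, 0 ≤ q i := fun i => by
      rw [← hq i]; exact (hrel _ _ h1).1 _
    have h𝒮nn : ∀ i z, 0 ≤ 𝒮 i z := fun i => MStep_nonneg hrel (hms i)
    -- support of each 𝒮 i (with q i ≠ 0) is inside range of Sf
    have hzero : ∀ z, (∀ j, z ≠ Sf j) → ∀ i, q i ≠ 0 → 𝒮 i z = 0 := by
      intro z hz i hqi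
      have hz0 : ∑ i, q i * 𝒮 i z = 0 := by
        have := congrFun heq z
        rw [this, Finset.sum_eq_zero (fun j _ => if_neg (hz j))]
      have hall := (Finset.sum_eq_zero_iff_of_nonneg
        (fun i _ => mul_nonneg (hqnn i) (h𝒮nn i z))).1 hz0 i (Finset.mem_univ i)
      exact (mul_eq_zero.1 hall).resolve_left hqi
    set T : Fin k → X → ℝ := fun i =>
      if q i = 0 then dirac (y i) else (fun z => ∑ j, 𝒮 i (Sf j) * ℛ j z) with hT
    have hTstep : ∀ i, MStep rel (y i) (T i) := by
      intro i
      by_cases hqi : q i = 0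
      · simp only [hT, if_pos hqi]; exact MStep.refl (y i)
      · simp only [hT, if_neg hqi]
        refine ih i hinj ?_ hcont
        funext z
        by_cases hex : ∃ j, z = Sf j
        · obtain ⟨j, rfl⟩ := hex
          rw [Finset.sum_eq_single j (fun j' _ hj' => by
            rw [if_neg (fun hh => hj' (hinj hh).symm)]) (by simp), if_pos rfl]
        · push_neg at hex
          rw [Finset.sum_eq_zero (fun j _ => if_neg (hex j))]
          exact hzero z hex i hqi
    have := MStep.step h1 hyinj hq hsupp hTstep
    have hfin : (fun z => ∑ i, q i * T i z) = (fun z => ∑ j, p j * ℛ j z) := by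
      funext z
      have step1 : ∑ i, q i * T i z = ∑ i, q i * ∑ j, 𝒮 i (Sf j) * ℛ j z := by
        refine Finset.sum_congr rfl (fun i _ => ?_)
        by_cases hqi : q i = 0
        · rw [hqi, zero_mul, zero_mul]
        · simp only [hT, if_neg hqi]
      rw [step1]
      have step2 : ∀ j, ∑ i, q i * 𝒮 i (Sf j) = p j := by
        intro j
        have := congrFun heq (Sf j)
        rw [this, Finset.sum_eq_single j (fun j' _ hj' => by
          rw [if_neg (fun hh => hj' (hinj hh).symm)]) (by simp), if_pos rfl]
      calc ∑ i, q i * ∑ j, 𝒮 i (Sf j) * ℛ j z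
          = ∑ j, (∑ i, q i * 𝒮 i (Sf j)) * ℛ j z := by
            simp_rw [Finset.mul_sum, Finset.sum_mul, mul_assoc]
            exact Finset.sum_comm
        _ = ∑ j, p j * ℛ j z := by simp_rw [step2]
    rwa [hfin] at this

open Classical in
/-- **Multistep composition.**  If `↪` relates elements to finite probability
distributions and `↝` is the generated multistep relation, then:
`R ↝ {S₁^{p₁}, …, S_n^{p_n}}` and `Sᵢ ↝ ℛᵢ` for each `i` imply
`R ↝ Σᵢ₌₁ⁿ pᵢ·ℛᵢ`. -/
theorem multistep_composition {X : Type*} (rel : X → (X → ℝ) → Prop)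
    (hrel : ∀ x 𝒟, rel x 𝒟 → IsSubDist 𝒟)
    {R : X} {n : ℕ} {Sf : Fin n → X} {p : Fin n → ℝ} {ℛ : Fin n → X → ℝ}
    (hinj : Function.Injective Sf)
    (h : MStep rel R (fun z => ∑ i, if z = Sf i then p i else 0))
    (hS : ∀ i, MStep rel (Sf i) (ℛ i)) :
    MStep rel R (fun z => ∑ i, p i * ℛ i z) := by
  exact MStep_key hrel h hinj rfl hS
end
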